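/- arXiv:1208.6195 — 10 statements merged into one kernel-verified Lean document; each statement's English description precedes it below -/
import Mathlib

section
/- For every positive integer m and every real β with 1 < β ≤ λ_m, the Hausdorff dimension of the set Σ_β(x) of β-expansions of x satisfies dim_H(Σ_β(x)) ≥ 1/(m+2) for every x ∈ (0, 1/(β-1)). -/
open scoped ENNReal

/-- The metric on `{0,1}^ℕ` given by `dist x y = (1/2)^(first index where x, y differ)`.
This is bi-Lipschitz equivalent to the metric `2^{-n(x,y)}` from the paper (with indices
starting at 1), hence induces the same Hausdorff dimension. -/
noncomputable instance : MetricSpace (ℕ → Bool) := PiNat.metricSpace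

/-- The set `Σ_β(x)` of β-expansions of `x`: sequences `(ε_n)_{n ≥ 1}` of zeros and ones
with `Σ_{n=1}^∞ ε_n / β^n = x` (here indexed from 0, so digit `n` has weight `β^{-(n+1)}`). -/
def betaExpansions (β x : ℝ) : Set (ℕ → Bool) :=
  {ε | ∑' n : ℕ, (if ε n then (1 : ℝ) else 0) / β ^ (n + 1) = x}

/-- `r` is the smallest real root greater than 1 of `P`. -/
def IsSmallestRootGT1 (P : ℝ → ℝ) (r : ℝ) : Prop :=
  1 < r ∧ P r = 0 ∧ ∀ y : ℝ, 1 < y → P y = 0 → r ≤ y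

set_option maxHeartbeats 1000000

open scoped NNReal

namespace BetaAux

noncomputable def lo (β : ℝ) : ℝ := 1 / (β ^ 2 - 1)
noncomputable def hi (β : ℝ) : ℝ := β / (β ^ 2 - 1)
noncomputable def cc (β : ℝ) : ℝ := 1 / (β - 1)
noncomputable def th (β : ℝ) : ℝ := hi β - 1

def inW (β y : ℝ) : Prop := lo β ≤ y ∧ y ≤ hi β

noncomputable instance (β y : ℝ) : Decidable (inW β y) := by unfold inW; infer_instance

noncomputable def dig (β y : ℝ) (b : Bool) : Bool :=
  if y < lo β then false else if y ≤ hi β then b else true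

noncomputable def Y (β x : ℝ) (d : ℕ → Bool) : ℕ → ℝ
  | 0 => x
  | n + 1 => β * Y β x d n - (if dig β (Y β x d n) (d n) then 1 else 0)

noncomputable def cnt (β x : ℝ) (d : ℕ → Bool) : ℕ → ℕ
  | 0 => 0
  | n + 1 => cnt β x d n + (if inW β (Y β x d n) then 1 else 0)

noncomputable def term (β x : ℝ) (d : ℕ → Bool) (t : ℕ) : ℝ :=
  if inW β (Y β x d t) ∧ d t = true then (1 / 2 : ℝ) ^ (cnt β x d t + 1) else 0

noncomputable def S (β x : ℝ) (d : ℕ → Bool) (n : ℕ) : ℝ :=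
  ∑ t ∈ Finset.range n, term β x d t

noncomputable def psi (β x : ℝ) (d : ℕ → Bool) : ℝ := ∑' t, term β x d t

noncomputable def E (β x : ℝ) (σ : ℕ → Bool) : ℕ → ℝ × ℕ
  | 0 => (x, 0)
  | n + 1 =>
      (β * (E β x σ n).1 - (if dig β (E β x σ n).1 (σ (E β x σ n).2) then 1 else 0),
       (E β x σ n).2 + (if inW β (E β x σ n).1 then 1 else 0))

noncomputable def enc (β x : ℝ) (σ : ℕ → Bool) : ℕ → Bool :=
  fun n => dig β (E β x σ n).1 (σ (E β x σ n).2)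

noncomputable def binVal (σ : ℕ → Bool) : ℝ := ∑' j, (if σ j then (1 / 2 : ℝ) ^ (j + 1) else 0)

section Basic

variable {β x : ℝ} {d : ℕ → Bool}

lemma D_pos (hβ : 1 < β) : 0 < β ^ 2 - 1 := by nlinarith

lemma lo_pos (hβ : 1 < β) : 0 < lo β := by
  have := D_pos hβ; unfold lo; positivity

lemma lo_lt_hi (hβ : 1 < β) : lo β < hi β := by
  have h := D_pos hβ; unfold lo hi
  exact div_lt_div_of_pos_right hβ h

lemma beta_mul_lo (hβ : 1 < β) : β * lo β = hi β := by
  have h := (D_pos hβ).ne'; unfold lo hi; field_simp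

lemma hi_eq (hβ : 1 < β) : hi β = 1 + th β := by unfold th; ring

lemma th_pos (hβ : 1 < β) (hφ : β ^ 2 < β + 1) : 0 < th β := by
  have h := D_pos hβ; unfold th hi
  rw [sub_pos, lt_div_iff₀ h]; nlinarith

lemma one_lt_hi (hβ : 1 < β) (hφ : β ^ 2 < β + 1) : 1 < hi β := by
  have := th_pos hβ hφ; unfold th at this; linarith

lemma lo_add_hi (hβ : 1 < β) : lo β + hi β = cc β := by
  have h1 := D_pos hβ; have h2 : β - 1 ≠ 0 := by nlinarith
  unfold lo hi cc; field_simp; ring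

lemma beta_mul_hi (hβ : 1 < β) : β * hi β = cc β - th β := by
  have h1 := (D_pos hβ).ne'; have h2 : β - 1 ≠ 0 := by nlinarith [D_pos hβ]
  unfold th hi cc; field_simp; ring

lemma beta_mul_cc (hβ : 1 < β) : β * cc β = cc β + 1 := by
  have h2 : β - 1 ≠ 0 := by nlinarith
  unfold cc; field_simp; ring

lemma hi_lt_cc (hβ : 1 < β) (hφ : β ^ 2 < β + 1) : hi β < cc β := by
  have := lo_add_hi hβ; have := lo_pos hβ; linarith

lemma cc_sub_th_lt_cc (hβ : 1 < β) (hφ : β ^ 2 < β + 1) : cc β - th β < cc β := by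
  have := th_pos hβ hφ; linarith

lemma one_lt_cc_sub_th (hβ : 1 < β) (hφ : β ^ 2 < β + 1) : 1 < cc β - th β := by
  rw [← beta_mul_hi hβ]
  have := one_lt_hi hβ hφ; nlinarith

end Basic

section Machine

variable {β x : ℝ} {d d' : ℕ → Bool} {σ : ℕ → Bool}

lemma Y_succ (n : ℕ) :
    Y β x d (n + 1) = β * Y β x d n - (if dig β (Y β x d n) (d n) then 1 else 0) := rfl

lemma cnt_succ (n : ℕ) :
    cnt β x d (n + 1) = cnt β x d n + (if inW β (Y β x d n) then 1 else 0) := rfl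

lemma dig_of_lt {y : ℝ} (h : y < lo β) (b : Bool) : dig β y b = false := by
  unfold dig; rw [if_pos h]

lemma dig_of_inW {y : ℝ} (h : inW β y) (b : Bool) : dig β y b = b := by
  unfold dig; rw [if_neg (not_lt.2 h.1), if_pos h.2]

lemma dig_of_gt {y : ℝ} (hβ : 1 < β) (h : hi β < y) (b : Bool) : dig β y b = true := by
  have h2 : ¬ y < lo β := not_lt.2 ((lo_lt_hi hβ).le.trans h.le)
  unfold dig; rw [if_neg h2, if_neg (not_le.2 h)]

lemma dig_dig (y : ℝ) (b : Bool) : dig β y (dig β y b) = dig β y b := by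
  unfold dig; split_ifs <;> rfl

/-- The trajectory stays in the open interval `(0, cc β)`. -/
lemma Y_mem (hβ : 1 < β) (hφ : β ^ 2 < β + 1) (hx0 : 0 < x) (hx1 : x < cc β) :
    ∀ n, 0 < Y β x d n ∧ Y β x d n < cc β := by
  intro n
  induction n with
  | zero => exact ⟨hx0, hx1⟩
  | succ n ih =>
    rcases ih with ⟨h0, h1⟩
    rw [Y_succ]
    set y := Y β x d n with hy
    rcases lt_or_ge y (lo β) with h | h
    · rw [dig_of_lt h]
      have : β * y < hi β := by
        rw [← beta_mul_lo hβ]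
        exact mul_lt_mul_of_pos_left h (by linarith)
      have := hi_lt_cc hβ hφ
      constructor
      · simp only [if_neg Bool.false_ne_true]; nlinarith
      · simp only [if_neg Bool.false_ne_true]; nlinarith
    · rcases le_or_gt y (hi β) with h2 | h2
      · rw [dig_of_inW ⟨h, h2⟩]
        have hby : β * y ≤ cc β - th β := by
          rw [← beta_mul_hi hβ]; nlinarith
        have hby' : hi β ≤ β * y := by
          rw [← beta_mul_lo hβ]; nlinarith
        have h3 := th_pos hβ hφ
        have h4 := one_lt_hi hβ hφ
        cases (d n) <;> simp <;> constructor <;> nlinarith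
      · rw [dig_of_gt hβ h2]
        have hby : cc β - th β < β * y := by rw [← beta_mul_hi hβ]; nlinarith
        have h5 := one_lt_cc_sub_th hβ hφ
        have h6 : β * y < β * cc β := by nlinarith
        rw [beta_mul_cc hβ] at h6
        simp only [if_pos rfl, if_true]
        constructor <;> nlinarith

/-- After a choice step (a step from a point of `W`), the trajectory is in `[th, cc - th]`. -/
lemma Y_G (hβ : 1 < β) (hφ : β ^ 2 < β + 1) {n : ℕ} (hW : inW β (Y β x d n)) :
    th β ≤ Y β x d (n + 1) ∧ Y β x d (n + 1) ≤ cc β - th β := by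
  rw [Y_succ]
  set y := Y β x d n with hy
  rw [dig_of_inW hW]
  have h1 : hi β ≤ β * y := by rw [← beta_mul_lo hβ]; nlinarith [hW.1]
  have h2 : β * y ≤ cc β - th β := by rw [← beta_mul_hi hβ]; nlinarith [hW.2]
  have h3 := th_pos hβ hφ
  have h4 := one_lt_hi hβ hφ
  have h5 := one_lt_cc_sub_th hβ hφ
  cases (d n) <;> simp <;> constructor <;> nlinarith [hi_eq hβ]

/-- Multiplicative orbit below `lo` matches the trajectory (forced 0 steps). -/
lemma Y_pow_lo (n : ℕ) : ∀ j, (∀ i < j, β ^ i * Y β x d n < lo β) →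
    Y β x d (n + j) = β ^ j * Y β x d n := by
  intro j
  induction j with
  | zero => intro _; simp
  | succ j ih =>
    intro hj
    have h1 : Y β x d (n + j) = β ^ j * Y β x d n := ih fun i hi => hj i (hi.trans j.lt_succ_self)
    have h2 : β ^ j * Y β x d n < lo β := hj j j.lt_succ_self
    have : Y β x d (n + (j + 1)) = β * Y β x d (n + j) -
        (if dig β (Y β x d (n + j)) (d (n + j)) then 1 else 0) := rfl
    rw [this, h1, dig_of_lt h2]
    simp only [if_neg Bool.false_ne_true]
    ring

/-- Reflected multiplicative orbit (forced 1 steps above `hi`). -/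
lemma Y_pow_hi (hβ : 1 < β) (n : ℕ) : ∀ j, (∀ i < j, β ^ i * (cc β - Y β x d n) < lo β) →
    Y β x d (n + j) = cc β - β ^ j * (cc β - Y β x d n) := by
  intro j
  induction j with
  | zero => intro _; simp
  | succ j ih =>
    intro hj
    have h1 : Y β x d (n + j) = cc β - β ^ j * (cc β - Y β x d n) :=
      ih fun i hi => hj i (hi.trans j.lt_succ_self)
    have h2 : β ^ j * (cc β - Y β x d n) < lo β := hj j j.lt_succ_self
    have hgt : hi β < Y β x d (n + j) := by
      rw [h1]; have := lo_add_hi hβ; linarith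
    have : Y β x d (n + (j + 1)) = β * Y β x d (n + j) -
        (if dig β (Y β x d (n + j)) (d (n + j)) then 1 else 0) := rfl
    rw [this, dig_of_gt hβ hgt, h1]
    simp only [if_pos rfl, if_true]
    linear_combination beta_mul_cc hβ

end Machine

section Hitting

variable {β x : ℝ} {d : ℕ → Bool} {m : ℕ}

/-- From any point in `(0, lo)`, the multiplicative orbit hits `W = [lo, hi]`. -/
lemma hit (hβ : 1 < β) {u : ℝ} (h0 : 0 < u) (hlt : u < lo β) :
    ∃ k, (∀ j < k, β ^ j * u < lo β) ∧ lo β ≤ β ^ k * u ∧ β ^ k * u ≤ hi β := by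
  have hex : ∃ k, lo β ≤ β ^ k * u := by
    obtain ⟨k, hk⟩ := pow_unbounded_of_one_lt (lo β / u) hβ
    exact ⟨k, by rw [← div_le_iff₀ h0] at *; linarith⟩
  classical
  set k := Nat.find hex with hk
  clear_value k
  have hku : lo β ≤ β ^ k * u := by rw [hk]; exact Nat.find_spec hex
  have hmin : ∀ j < k, β ^ j * u < lo β := fun j hj =>
    not_le.1 (Nat.find_min hex (by omega : j < Nat.find hex))
  refine ⟨k, hmin, hku, ?_⟩
  rcases Nat.eq_zero_or_pos k with h | h
  · rw [h] at hku; simp at hku; linarith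
  · obtain ⟨k', rfl⟩ := Nat.exists_eq_succ_of_ne_zero h.ne'
    have h5 : β ^ k' * u < lo β := hmin _ k'.lt_succ_self
    have hb : (0:ℝ) < β := lt_trans one_pos hβ
    have h6 : β * (β ^ k' * u) < β * lo β := mul_lt_mul_of_pos_left h5 hb
    rw [beta_mul_lo hβ] at h6
    calc β ^ (k' + 1) * u = β * (β ^ k' * u) := by rw [pow_succ]; ring
    _ ≤ hi β := h6.le

/-- Key consequence of `P β ≤ 0` : the hitting time from `[th, lo)` is at most `m + 1`. -/
lemma hitB (hβ : 1 < β) (hkey : lo β ≤ β ^ (m + 1) * th β) {u : ℝ}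
    (h0 : th β ≤ u) (hth : 0 < th β) (hlt : u < lo β) :
    ∃ k ≤ m + 1, (∀ j < k, β ^ j * u < lo β) ∧ lo β ≤ β ^ k * u ∧ β ^ k * u ≤ hi β := by
  obtain ⟨k, hmin, h1, h2⟩ := hit hβ (lt_of_lt_of_le hth h0) hlt
  refine ⟨k, ?_, hmin, h1, h2⟩
  by_contra hc
  push_neg at hc
  have h3 : β ^ (m + 1) * u < lo β := hmin _ hc
  have h4 : β ^ (m + 1) * th β ≤ β ^ (m + 1) * u := by
    have : (0:ℝ) < β ^ (m+1) := pow_pos (by linarith) _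
    nlinarith
  linarith

/-- The gap between consecutive visits of the trajectory to `W` is at most `m + 2`. -/
lemma gap (hβ : 1 < β) (hφ : β ^ 2 < β + 1) (hkey : lo β ≤ β ^ (m + 1) * th β)
    {n : ℕ} (hW : inW β (Y β x d n)) :
    ∃ t, n < t ∧ t ≤ n + (m + 2) ∧ inW β (Y β x d t) := by
  obtain ⟨hG1, hG2⟩ := Y_G hβ hφ hW
  set y := Y β x d (n + 1) with hy
  have hth := th_pos hβ hφ
  rcases lt_or_ge y (lo β) with h | h
  · obtain ⟨k, hk, hmin, h1, h2⟩ := hitB hβ hkey hG1 hth h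
    refine ⟨n + 1 + k, by omega, by omega, ?_⟩
    have := Y_pow_lo (β := β) (x := x) (d := d) (n + 1) k hmin
    rw [this]; exact ⟨h1, h2⟩
  · rcases le_or_gt y (hi β) with h2 | h2
    · exact ⟨n + 1, n.lt_succ_self, by omega, h, h2⟩
    · set u := cc β - y with hu
      have hu1 : th β ≤ u := by simp only [hu]; linarith
      have hu2 : u < lo β := by
        have := lo_add_hi hβ; simp only [hu]; linarith
      obtain ⟨k, hk, hmin, h1, h2⟩ := hitB hβ hkey hu1 hth hu2
      refine ⟨n + 1 + k, by omega, by omega, ?_⟩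
      have := Y_pow_hi hβ (β := β) (x := x) (d := d) (n + 1) k hmin
      rw [this]
      have hlh := lo_add_hi hβ
      constructor <;> simp only [← hy, ← hu] <;> linarith

/-- Uniform bound (independent of the digit sequence) on the first visit to `W`. -/
lemma first (hβ : 1 < β) (hφ : β ^ 2 < β + 1) (hx0 : 0 < x) (hx1 : x < cc β) :
    ∃ N : ℕ, ∀ d : ℕ → Bool, ∃ t ≤ N, inW β (Y β x d t) := by
  rcases lt_or_ge x (lo β) with h | h
  · obtain ⟨k, hmin, h1, h2⟩ := hit hβ hx0 h
    refine ⟨k, fun d => ⟨k, le_refl _, ?_⟩⟩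
    have := Y_pow_lo (β := β) (x := x) (d := d) 0 k hmin
    simp only [Nat.zero_add] at this
    rw [this]; exact ⟨h1, h2⟩
  · rcases le_or_gt x (hi β) with h2 | h2
    · exact ⟨0, fun d => ⟨0, le_refl _, h, h2⟩⟩
    · have hu0 : 0 < cc β - x := by linarith
      have hu2 : cc β - x < lo β := by have := lo_add_hi hβ; linarith
      obtain ⟨k, hmin, h1, h2⟩ := hit hβ hu0 hu2
      refine ⟨k, fun d => ⟨k, le_refl _, ?_⟩⟩
      have := Y_pow_hi hβ (β := β) (x := x) (d := d) 0 k hmin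
      simp only [Nat.zero_add] at this
      rw [this, show Y β x d 0 = x from rfl]
      have hlh := lo_add_hi hβ
      constructor <;> linarith

end Hitting

section Counting

variable {β x : ℝ} {d d' : ℕ → Bool} {m : ℕ}

lemma cnt_mono : Monotone (cnt β x d) :=
  monotone_nat_of_le_succ fun n => by rw [cnt_succ]; exact Nat.le_add_right _ _

lemma cnt_succ_of_inW {n : ℕ} (h : inW β (Y β x d n)) :
    cnt β x d (n + 1) = cnt β x d n + 1 := by rw [cnt_succ, if_pos h]

lemma cnt_succ_of_not_inW {n : ℕ} (h : ¬ inW β (Y β x d n)) :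
    cnt β x d (n + 1) = cnt β x d n := by rw [cnt_succ, if_neg h]; ring

lemma cnt_chain (hβ : 1 < β) (hφ : β ^ 2 < β + 1) (hkey : lo β ≤ β ^ (m + 1) * th β)
    {N : ℕ} (hN : ∃ t ≤ N, inW β (Y β x d t)) :
    ∀ i : ℕ, ∃ t, t ≤ N + i * (m + 2) ∧ inW β (Y β x d t) ∧ i ≤ cnt β x d t := by
  intro i
  induction i with
  | zero => obtain ⟨t, ht, hW⟩ := hN; exact ⟨t, by omega, hW, Nat.zero_le _⟩
  | succ i ih =>
    obtain ⟨t, ht, hW, hc⟩ := ih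
    obtain ⟨t', ht'1, ht'2, hW'⟩ := gap hβ hφ hkey hW
    have hexp0 : (i + 1) * (m + 2) = i * (m + 2) + (m + 2) := by ring
    refine ⟨t', by omega, hW', ?_⟩
    have h1 : cnt β x d (t + 1) = cnt β x d t + 1 := cnt_succ_of_inW hW
    have h2 : cnt β x d (t + 1) ≤ cnt β x d t' := cnt_mono (by omega)
    have hexp : (i + 1) * (m + 2) = i * (m + 2) + (m + 2) := by ring
    omega

lemma cnt_lb (hβ : 1 < β) (hφ : β ^ 2 < β + 1) (hkey : lo β ≤ β ^ (m + 1) * th β)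
    {N : ℕ} (hN : ∃ t ≤ N, inW β (Y β x d t)) {n i : ℕ} (h : N + i * (m + 2) < n) :
    i + 1 ≤ cnt β x d n := by
  obtain ⟨t, ht, hW, hc⟩ := cnt_chain hβ hφ hkey hN i
  have h1 : cnt β x d (t + 1) = cnt β x d t + 1 := cnt_succ_of_inW hW
  have h2 : cnt β x d (t + 1) ≤ cnt β x d n := cnt_mono (by omega)
  omega

lemma cnt_tendsto (hβ : 1 < β) (hφ : β ^ 2 < β + 1) (hkey : lo β ≤ β ^ (m + 1) * th β)
    {N : ℕ} (hN : ∃ t ≤ N, inW β (Y β x d t)) :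
    Filter.Tendsto (cnt β x d) Filter.atTop Filter.atTop := by
  refine Monotone.tendsto_atTop_atTop cnt_mono fun b => ⟨N + b * (m + 2) + 1, ?_⟩
  have := cnt_lb hβ hφ hkey hN (n := N + b * (m + 2) + 1) (i := b) (by omega)
  omega

lemma cnt_real_lb (hβ : 1 < β) (hφ : β ^ 2 < β + 1) (hkey : lo β ≤ β ^ (m + 1) * th β)
    {N : ℕ} (hN : ∃ t ≤ N, inW β (Y β x d t)) (n : ℕ) :
    (n : ℝ) ≤ (m + 2) * (cnt β x d n) + (N + m + 2) := by
  have hc0 : (0:ℝ) ≤ (cnt β x d n : ℝ) := Nat.cast_nonneg _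
  rcases le_or_gt n (N + (m + 2)) with hn | hn
  · have : (n:ℝ) ≤ (N:ℝ) + (m + 2) := by exact_mod_cast hn
    push_cast
    nlinarith
  · set i := (n - N - 1) / (m + 2) with hi
    have h1 : i * (m + 2) ≤ n - N - 1 := Nat.div_mul_le_self _ _
    have hlt : N + i * (m + 2) < n := by
      calc N + i * (m + 2) ≤ N + (n - N - 1) := Nat.add_le_add_left h1 _
      _ < n := by omega
    have hc : i + 1 ≤ cnt β x d n := cnt_lb hβ hφ hkey hN hlt
    have h2 : n - N - 1 < (i + 1) * (m + 2) := by
      have hm := Nat.div_add_mod (n - N - 1) (m + 2)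
      have hmo := Nat.mod_lt (n - N - 1) (show 0 < m + 2 by omega)
      have e1 : (m + 2) * ((n - N - 1) / (m + 2)) = i * (m + 2) := by rw [hi]; ring
      have e2 : (i + 1) * (m + 2) = i * (m + 2) + (m + 2) := by ring
      omega
    have h2' : (n : ℝ) - N - 1 < ((i:ℝ) + 1) * ((m:ℝ) + 2) := by
      have hcast : ((n - N - 1 : ℕ) : ℝ) < (((i + 1) * (m + 2) : ℕ) : ℝ) := by exact_mod_cast h2
      have heq : (n - N - 1 : ℕ) + (N + 1) = n := by omega
      have heq' : ((n - N - 1 : ℕ) : ℝ) + ((N:ℝ) + 1) = (n:ℝ) := by exact_mod_cast heq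
      push_cast at hcast
      linarith
    have hc' : (i:ℝ) + 1 ≤ (cnt β x d n : ℝ) := by exact_mod_cast hc
    have hm2 : (0:ℝ) < (m:ℝ) + 2 := by positivity
    nlinarith [hc', h2']

end Counting

section Sums

variable {β x : ℝ} {d d' : ℕ → Bool} {m : ℕ}

lemma term_nonneg (t : ℕ) : 0 ≤ term β x d t := by
  unfold term; split_ifs <;> positivity

lemma term_le {t : ℕ} (h : inW β (Y β x d t)) :
    term β x d t ≤ (1 / 2 : ℝ) ^ (cnt β x d t + 1) := by
  unfold term; split_ifs
  · exact le_rfl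
  · positivity

lemma term_eq_zero {t : ℕ} (h : ¬ inW β (Y β x d t)) : term β x d t = 0 := by
  unfold term; rw [if_neg (fun hc => h hc.1)]

lemma S_succ (n : ℕ) : S β x d (n + 1) = S β x d n + term β x d n :=
  Finset.sum_range_succ _ _

lemma S_sub_le {n : ℕ} : ∀ T, n ≤ T →
    S β x d T - S β x d n ≤ (1 / 2 : ℝ) ^ (cnt β x d n) - (1 / 2 : ℝ) ^ (cnt β x d T) := by
  intro T
  induction T with
  | zero => intro h; interval_cases n; simp
  | succ T ih =>
    intro h
    rcases Nat.lt_or_ge n (T + 1) with h' | h'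
    · have hT : n ≤ T := by omega
      have h1 := ih hT
      rw [S_succ]
      by_cases hW : inW β (Y β x d T)
      · have h2 := term_le (β := β) (x := x) (d := d) hW
        have h3 : cnt β x d (T + 1) = cnt β x d T + 1 := cnt_succ_of_inW hW
        rw [h3, pow_succ]
        rw [pow_succ] at h2
        linarith
      · have h2 := term_eq_zero (β := β) (x := x) (d := d) hW
        have h3 : cnt β x d (T + 1) = cnt β x d T := cnt_succ_of_not_inW hW
        rw [h3]; linarith
    · have : n = T + 1 := by omega
      subst this; simp

lemma summable_term : Summable (term β x d) := by
  apply summable_of_sum_range_le (term_nonneg) (c := 1)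
  intro T
  have h := S_sub_le (β := β) (x := x) (d := d) (n := 0) T (Nat.zero_le _)
  have h0 : S β x d 0 = 0 := by simp [S]
  have hc0 : cnt β x d 0 = 0 := rfl
  rw [h0, hc0] at h
  simp only [pow_zero] at h
  have : (0:ℝ) ≤ (1/2:ℝ) ^ (cnt β x d T) := by positivity
  calc ∑ i ∈ Finset.range T, term β x d i = S β x d T := rfl
  _ ≤ 1 := by linarith

lemma S_le_psi (n : ℕ) : S β x d n ≤ psi β x d :=
  Summable.sum_le_tsum (Finset.range n) (fun i _ => term_nonneg i) summable_term

lemma psi_le_S_add (n : ℕ) : psi β x d ≤ S β x d n + (1 / 2 : ℝ) ^ (cnt β x d n) := by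
  have htend := (summable_term (β := β) (x := x) (d := d)).hasSum.tendsto_sum_nat
  refine le_of_tendsto htend ?_
  filter_upwards [Filter.eventually_ge_atTop n] with T hT
  have h := S_sub_le (β := β) (x := x) (d := d) T hT
  have : (0:ℝ) ≤ (1/2:ℝ) ^ (cnt β x d T) := by positivity
  show S β x d T ≤ _
  linarith

lemma psi_dist_S (n : ℕ) : |psi β x d - S β x d n| ≤ (1 / 2 : ℝ) ^ (cnt β x d n) := by
  rw [abs_le]
  have h1 := S_le_psi (β := β) (x := x) (d := d) n
  have h2 := psi_le_S_add (β := β) (x := x) (d := d) n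
  have : (0:ℝ) ≤ (1/2:ℝ) ^ (cnt β x d n) := by positivity
  constructor <;> linarith

lemma Y_congr : ∀ n, (∀ t < n, d t = d' t) → Y β x d n = Y β x d' n := by
  intro n
  induction n with
  | zero => intro _; rfl
  | succ n ih =>
    intro h
    have h1 : Y β x d n = Y β x d' n := ih fun t ht => h t (by omega)
    show β * Y β x d n - _ = β * Y β x d' n - _
    rw [h1, h n n.lt_succ_self]

lemma cnt_congr : ∀ n, (∀ t < n, d t = d' t) → cnt β x d n = cnt β x d' n := by
  intro n
  induction n with
  | zero => intro _; rfl
  | succ n ih =>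
    intro h
    have h1 : cnt β x d n = cnt β x d' n := ih fun t ht => h t (by omega)
    have h2 : Y β x d n = Y β x d' n := Y_congr n fun t ht => h t (by omega)
    rw [cnt_succ, cnt_succ, h1, h2]

lemma S_congr {n : ℕ} (h : ∀ t < n, d t = d' t) : S β x d n = S β x d' n := by
  unfold S
  refine Finset.sum_congr rfl fun t ht => ?_
  rw [Finset.mem_range] at ht
  unfold term
  rw [Y_congr t fun s hs => h s (by omega), cnt_congr t fun s hs => h s (by omega),
    h t ht]

lemma psi_holder_n {n : ℕ} (h : ∀ t < n, d t = d' t) :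
    |psi β x d - psi β x d'| ≤ 2 * (1 / 2 : ℝ) ^ (cnt β x d n) := by
  have h1 := psi_dist_S (β := β) (x := x) (d := d) n
  have h2 := psi_dist_S (β := β) (x := x) (d := d') n
  have h3 := S_congr (β := β) (x := x) h
  have h4 : cnt β x d n = cnt β x d' n := cnt_congr n h
  rw [← h4] at h2
  rw [abs_le] at *
  rw [h3] at h1
  constructor <;> linarith

end Sums

section Encode

variable {β x : ℝ} {σ : ℕ → Bool} {m : ℕ}

lemma E_consistent : ∀ n, (E β x σ n).1 = Y β x (enc β x σ) n ∧
    (E β x σ n).2 = cnt β x (enc β x σ) n := by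
  intro n
  induction n with
  | zero => exact ⟨rfl, rfl⟩
  | succ n ih =>
    obtain ⟨h1, h2⟩ := ih
    constructor
    · show β * (E β x σ n).1 - (if dig β (E β x σ n).1 (σ (E β x σ n).2) then (1:ℝ) else 0) = _
      rw [Y_succ]
      have he : enc β x σ n = dig β (E β x σ n).1 (σ (E β x σ n).2) := rfl
      rw [h1, he, h1, dig_dig]
    · show (E β x σ n).2 + (if inW β (E β x σ n).1 then 1 else 0) = _
      rw [cnt_succ, h1, h2]

lemma dig_enc (n : ℕ) : dig β (Y β x (enc β x σ) n) (enc β x σ n) = enc β x σ n := by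
  have he : enc β x σ n = dig β (E β x σ n).1 (σ (E β x σ n).2) := rfl
  conv_lhs => rw [he, ← (E_consistent (σ := σ) n).1, dig_dig]
  exact he.symm

lemma Y_enc_succ (n : ℕ) : Y β x (enc β x σ) (n + 1) =
    β * Y β x (enc β x σ) n - (if enc β x σ n then 1 else 0) := by
  rw [Y_succ, dig_enc]

lemma exp_partial (hβ : 1 < β) : ∀ n,
    ∑ t ∈ Finset.range n, (if enc β x σ t then (1:ℝ) else 0) / β ^ (t + 1) =
      x - Y β x (enc β x σ) n / β ^ n := by
  have hb0 : (β:ℝ) ≠ 0 := by positivity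
  intro n
  induction n with
  | zero => show (0:ℝ) = x - Y β x (enc β x σ) 0 / β ^ 0; simp [show Y β x (enc β x σ) 0 = x from rfl]
  | succ n ih =>
    rw [Finset.sum_range_succ, ih, Y_enc_succ]
    have hpow : (β:ℝ) ^ (n + 1) ≠ 0 := by positivity
    have hpn : (β:ℝ) ^ n ≠ 0 := by positivity
    set b := (if enc β x σ n = true then (1:ℝ) else 0) with hb
    have hstep : (β * Y β x (enc β x σ) n - b) / β ^ (n + 1) =
        Y β x (enc β x σ) n / β ^ n - b / β ^ (n + 1) := by
      rw [pow_succ]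
      field_simp
    rw [hstep]
    ring

lemma enc_mem (hβ : 1 < β) (hφ : β ^ 2 < β + 1) (hx0 : 0 < x) (hx1 : x < cc β) :
    enc β x σ ∈ betaExpansions β x := by
  have hb0 : (0:ℝ) < β := by linarith
  have hinv : (0:ℝ) ≤ 1/β := by positivity
  have hinv1 : 1/β < 1 := by rw [div_lt_one hb0]; linarith
  have hsg : Summable (fun t : ℕ => (1/β:ℝ) ^ (t + 1)) :=
    ((summable_geometric_of_lt_one hinv hinv1).mul_right (1/β)).congr
      fun t => (pow_succ (1/β:ℝ) t).symm
  have hsum : Summable (fun t => (if enc β x σ t then (1:ℝ) else 0) / β ^ (t + 1)) := by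
    refine hsg.of_nonneg_of_le (fun t => by positivity) fun t => ?_
    rw [div_pow, one_pow]
    split_ifs
    · exact le_rfl
    · simp only [zero_div]
      positivity
  have htendY : Filter.Tendsto (fun n => Y β x (enc β x σ) n / β ^ n)
      Filter.atTop (nhds 0) := by
    have hbdd : ∀ n, |Y β x (enc β x σ) n / β ^ n| ≤ cc β * (1/β) ^ n := by
      intro n
      obtain ⟨hY0, hY1⟩ := Y_mem (d := enc β x σ) hβ hφ hx0 hx1 n
      have hp : (0:ℝ) < β ^ n := by positivity
      rw [abs_of_nonneg (by positivity), div_le_iff₀ hp, one_div, inv_pow]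
      have h2 : cc β * (β ^ n)⁻¹ * β ^ n = cc β := by field_simp
      rw [h2]; exact hY1.le
    have h0 : Filter.Tendsto (fun n : ℕ => cc β * (1/β) ^ n) Filter.atTop (nhds 0) := by
      have := tendsto_pow_atTop_nhds_zero_of_lt_one hinv hinv1
      simpa using this.const_mul (cc β)
    refine squeeze_zero_norm (fun n => ?_) h0
    rw [Real.norm_eq_abs]
    exact hbdd n
  have htend : Filter.Tendsto
      (fun n => ∑ t ∈ Finset.range n, (if enc β x σ t then (1:ℝ) else 0) / β ^ (t + 1))
      Filter.atTop (nhds x) := by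
    have heq : (fun n => ∑ t ∈ Finset.range n, (if enc β x σ t then (1:ℝ) else 0) / β ^ (t + 1))
        = fun n => x - Y β x (enc β x σ) n / β ^ n := funext (exp_partial hβ)
    rw [heq]
    simpa using (tendsto_const_nhds (x := x) (f := (Filter.atTop : Filter ℕ))).sub htendY
  have := (hsum.hasSum_iff_tendsto_nat).2 htend
  exact this.tsum_eq

lemma summable_bin (σ : ℕ → Bool) : Summable (fun j => (if σ j then (1/2:ℝ) ^ (j + 1) else 0)) := by
  have hsg : Summable (fun t : ℕ => (1/2:ℝ) ^ (t + 1)) :=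
    ((summable_geometric_of_lt_one (by norm_num : (0:ℝ) ≤ 1/2)
      (by norm_num : (1/2:ℝ) < 1)).mul_right (1/2)).congr fun t => (pow_succ (1/2:ℝ) t).symm
  refine hsg.of_nonneg_of_le (fun t => by positivity) fun t => ?_
  split_ifs
  · exact le_rfl
  · positivity

lemma S_enc : ∀ n, S β x (enc β x σ) n =
    ∑ j ∈ Finset.range (cnt β x (enc β x σ) n), (if σ j then (1/2:ℝ) ^ (j + 1) else 0) := by
  intro n
  induction n with
  | zero => rfl
  | succ n ih =>
    rw [S_succ, ih]
    by_cases hW : inW β (Y β x (enc β x σ) n)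
    · rw [cnt_succ_of_inW hW, Finset.sum_range_succ]
      congr 1
      have he : enc β x σ n = dig β (E β x σ n).1 (σ (E β x σ n).2) := rfl
      have h1 := (E_consistent (β := β) (x := x) (σ := σ) n).1
      have h2 := (E_consistent (β := β) (x := x) (σ := σ) n).2
      have henc : enc β x σ n = σ (cnt β x (enc β x σ) n) := by
        rw [he, h1, dig_of_inW hW, h2]
      unfold term
      rw [henc]
      by_cases hσ : σ (cnt β x (enc β x σ) n) = true
      · rw [if_pos ⟨hW, hσ⟩, if_pos hσ]
      · rw [if_neg (fun hc => hσ hc.2), if_neg hσ]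
    · rw [cnt_succ_of_not_inW hW, term_eq_zero hW, add_zero]

lemma psi_enc (hβ : 1 < β) (hφ : β ^ 2 < β + 1) (hkey : lo β ≤ β ^ (m + 1) * th β)
    {N : ℕ} (hN : ∃ t ≤ N, inW β (Y β x (enc β x σ) t)) :
    psi β x (enc β x σ) = binVal σ := by
  have h1 : Filter.Tendsto (S β x (enc β x σ)) Filter.atTop (nhds (psi β x (enc β x σ))) :=
    (summable_term).hasSum.tendsto_sum_nat
  have h2 : Filter.Tendsto
      (fun k => ∑ j ∈ Finset.range k, (if σ j then (1/2:ℝ) ^ (j + 1) else 0))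
      Filter.atTop (nhds (binVal σ)) := (summable_bin σ).hasSum.tendsto_sum_nat
  have h3 := h2.comp (cnt_tendsto hβ hφ hkey hN)
  have h4 : (fun n => ∑ j ∈ Finset.range (cnt β x (enc β x σ) n),
      (if σ j then (1/2:ℝ) ^ (j + 1) else 0)) = S β x (enc β x σ) := by
    funext n; rw [S_enc]
  rw [show ((fun k => ∑ j ∈ Finset.range k, (if σ j then (1/2:ℝ) ^ (j + 1) else 0)) ∘
      (cnt β x (enc β x σ))) = S β x (enc β x σ) from h4] at h3
  exact tendsto_nhds_unique h1 h3

end Encode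

section BinVal

noncomputable def bu (t : ℝ) : ℕ → ℝ
  | 0 => t
  | j + 1 => 2 * bu t j - (if (1/2 : ℝ) ≤ bu t j then 1 else 0)

noncomputable def bsig (t : ℝ) : ℕ → Bool := fun j => decide ((1/2 : ℝ) ≤ bu t j)

lemma bu_mem {t : ℝ} (h0 : 0 ≤ t) (h1 : t ≤ 1) : ∀ j, 0 ≤ bu t j ∧ bu t j ≤ 1 := by
  intro j
  induction j with
  | zero => exact ⟨h0, h1⟩
  | succ j ih =>
    obtain ⟨ih0, ih1⟩ := ih
    show 0 ≤ 2 * bu t j - _ ∧ 2 * bu t j - _ ≤ 1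
    split_ifs with h
    · constructor <;> linarith
    · push_neg at h
      constructor <;> linarith

lemma bin_partial {t : ℝ} : ∀ n,
    ∑ j ∈ Finset.range n, (if bsig t j then (1/2:ℝ) ^ (j + 1) else 0) = t - bu t n / 2 ^ n := by
  intro n
  induction n with
  | zero => show (0:ℝ) = t - bu t 0 / 1; show (0:ℝ) = t - t / 1; ring
  | succ n ih =>
    rw [Finset.sum_range_succ, ih]
    have hb : bu t (n + 1) = 2 * bu t n - (if (1/2 : ℝ) ≤ bu t n then 1 else 0) := rfl
    have hs : (if bsig t n then (1/2:ℝ) ^ (n + 1) else 0) =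
        (if (1/2 : ℝ) ≤ bu t n then (1:ℝ) else 0) * (1/2:ℝ) ^ (n + 1) := by
      unfold bsig
      by_cases h : (1/2 : ℝ) ≤ bu t n
      · simp [h]
      · simp [h]
    rw [hb, hs]
    have h2 : (2:ℝ) ^ n ≠ 0 := by positivity
    have h21 : (2:ℝ) ^ (n + 1) ≠ 0 := by positivity
    rw [pow_succ]
    set c := (if (1/2 : ℝ) ≤ bu t n then (1:ℝ) else 0)
    simp only [one_div, inv_pow]
    field_simp
    ring

lemma binVal_bsig {t : ℝ} (h0 : 0 ≤ t) (h1 : t ≤ 1) : binVal (bsig t) = t := by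
  have htend : Filter.Tendsto
      (fun n => ∑ j ∈ Finset.range n, (if bsig t j then (1/2:ℝ) ^ (j + 1) else 0))
      Filter.atTop (nhds t) := by
    have heq : (fun n => ∑ j ∈ Finset.range n, (if bsig t j then (1/2:ℝ) ^ (j + 1) else 0))
        = fun n => t - bu t n / 2 ^ n := funext bin_partial
    rw [heq]
    have htendu : Filter.Tendsto (fun n : ℕ => bu t n / 2 ^ n) Filter.atTop (nhds 0) := by
      have h0' : Filter.Tendsto (fun n : ℕ => (1/2:ℝ) ^ n) Filter.atTop (nhds 0) :=
        tendsto_pow_atTop_nhds_zero_of_lt_one (by norm_num) (by norm_num)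
      refine squeeze_zero_norm (fun n => ?_) h0'
      have hm := bu_mem h0 h1 n
      have hp : (0:ℝ) < 2 ^ n := by positivity
      rw [Real.norm_eq_abs, abs_of_nonneg (div_nonneg hm.1 hp.le), div_pow, one_pow,
        div_le_div_iff₀ hp hp]
      nlinarith [hm.1, hm.2, hp]
    simpa using (tendsto_const_nhds (x := t) (f := (Filter.atTop : Filter ℕ))).sub htendu
  exact ((summable_bin (bsig t)).hasSum_iff_tendsto_nat.2 htend).tsum_eq

end BinVal

section Holder

lemma pow_half_bound {M B : ℝ} (hM : 0 < M) {k n : ℕ} (h : (n:ℝ) ≤ M * k + B) :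
    (1/2:ℝ) ^ k ≤ 2 ^ (B / M) * ((1/2:ℝ) ^ n) ^ M⁻¹ := by
  have h2 : (0:ℝ) < 2 := by norm_num
  have hhalf : ∀ j : ℕ, (1/2:ℝ) ^ j = (2:ℝ) ^ (-(j:ℝ)) := by
    intro j
    rw [one_div, inv_pow, ← Real.rpow_natCast 2 j, ← Real.rpow_neg h2.le]
  rw [hhalf k, hhalf n, ← Real.rpow_mul h2.le, ← Real.rpow_add h2]
  apply Real.rpow_le_rpow_of_exponent_le (by norm_num : (1:ℝ) ≤ 2)
  have he : B / M + -(n:ℝ) * M⁻¹ = (B + -(n:ℝ)) / M := by ring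
  rw [he, le_div_iff₀ hM]
  nlinarith [h]

lemma psi_holder_bound {β x : ℝ} {m : ℕ} (hβ : 1 < β) (hφ : β ^ 2 < β + 1)
    (hkey : lo β ≤ β ^ (m + 1) * th β) {N : ℕ}
    (hfirst : ∀ d : ℕ → Bool, ∃ t ≤ N, inW β (Y β x d t)) (d d' : ℕ → Bool) :
    |psi β x d - psi β x d'| ≤ (2 * (2:ℝ) ^ (((N:ℝ) + m + 2) / ((m:ℝ) + 2))) *
      dist d d' ^ (((m:ℝ) + 2)⁻¹) := by
  have hM : (0:ℝ) < (m:ℝ) + 2 := by positivity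
  by_cases hdd : d = d'
  · rw [hdd, sub_self, abs_zero, dist_self, Real.zero_rpow (ne_of_gt (inv_pos.2 hM)), mul_zero]
  · have hagree : ∀ t < PiNat.firstDiff d d', d t = d' t := fun t ht =>
      PiNat.apply_eq_of_lt_firstDiff ht
    set n := PiNat.firstDiff d d' with hn
    have h1 := psi_holder_n (β := β) (x := x) hagree
    have h2 := cnt_real_lb hβ hφ hkey (hfirst d) n
    have h3 := pow_half_bound hM (B := (N:ℝ) + m + 2) (k := cnt β x d n) (n := n)
      (by push_cast at h2 ⊢; linarith)
    have hd : dist d d' = (1/2:ℝ) ^ n := PiNat.dist_eq_of_ne hdd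
    rw [hd]
    calc |psi β x d - psi β x d'| ≤ 2 * (1/2:ℝ) ^ (cnt β x d n) := h1
    _ ≤ 2 * ((2:ℝ) ^ (((N:ℝ) + m + 2) / ((m:ℝ) + 2)) * ((1/2:ℝ) ^ n) ^ (((m:ℝ) + 2)⁻¹)) := by
        have := mul_le_mul_of_nonneg_left h3 (by norm_num : (0:ℝ) ≤ 2)
        linarith
    _ = _ := by ring

end Holder

section Numeric

variable {β : ℝ} {m : ℕ}

lemma sq_lt_of_P_nonpos (hβ : 1 < β) (hP : β ^ (m + 3) - β ^ (m + 2) - β ^ (m + 1) + 1 ≤ 0) :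
    β ^ 2 < β + 1 := by
  have hB : (0:ℝ) < β ^ (m + 1) := pow_pos (by linarith) _
  have e3 : β ^ (m + 3) = β ^ (m + 1) * β ^ 2 := by
    rw [show m + 3 = (m + 1) + 2 from rfl, pow_add]
  have e2 : β ^ (m + 2) = β ^ (m + 1) * β := by
    rw [show m + 2 = (m + 1) + 1 from rfl, pow_succ]
  rw [e3, e2] at hP
  by_contra hc
  push_neg at hc
  nlinarith

lemma key_of_P_nonpos (hβ : 1 < β) (hP : β ^ (m + 3) - β ^ (m + 2) - β ^ (m + 1) + 1 ≤ 0) :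
    lo β ≤ β ^ (m + 1) * th β := by
  have hD := D_pos hβ
  have hB : (0:ℝ) < β ^ (m + 1) := pow_pos (by linarith) _
  have e3 : β ^ (m + 3) = β ^ (m + 1) * β ^ 2 := by
    rw [show m + 3 = (m + 1) + 2 from rfl, pow_add]
  have e2 : β ^ (m + 2) = β ^ (m + 1) * β := by
    rw [show m + 2 = (m + 1) + 1 from rfl, pow_succ]
  rw [e3, e2] at hP
  have h1 : 1 ≤ β ^ (m + 1) * (1 + β - β ^ 2) := by nlinarith
  have hth : th β = (1 + β - β ^ 2) / (β ^ 2 - 1) := by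
    unfold th hi; field_simp; ring
  rw [hth, lo, ← mul_div_assoc, div_le_div_iff₀ hD hD]
  nlinarith

lemma P_nonpos (hm : 0 < m) {lam : ℝ}
    (hlam : IsSmallestRootGT1 (fun y => y ^ (m + 3) - y ^ (m + 2) - y ^ (m + 1) + 1) lam)
    (hβ : 1 < β) (hβlam : β ≤ lam) :
    β ^ (m + 3) - β ^ (m + 2) - β ^ (m + 1) + 1 ≤ 0 := by
  by_contra hc
  push_neg at hc
  set ε := min (1/4 : ℝ) ((β - 1) / 2) with hε
  have hε0 : 0 < ε := lt_min (by norm_num) (by linarith)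
  have hε4 : ε ≤ 1/4 := min_le_left _ _
  have hεβ : ε ≤ (β - 1) / 2 := min_le_right _ _
  set y0 := 1 + ε with hy0
  have hy01 : 1 < y0 := by simp only [hy0]; linarith
  have hy0β : y0 ≤ β := by simp only [hy0]; linarith
  have hBn : 1 + ((m:ℝ) + 1) * ε ≤ y0 ^ (m + 1) := by
    have := one_add_mul_le_pow (by linarith : (-2:ℝ) ≤ ε) (m + 1)
    simpa [hy0] using this
  have hBpos : (0:ℝ) < y0 ^ (m + 1) := pow_pos (by linarith) _
  have e3 : y0 ^ (m + 3) = y0 ^ (m + 1) * y0 ^ 2 := by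
    rw [show m + 3 = (m + 1) + 2 from rfl, pow_add]
  have e2 : y0 ^ (m + 2) = y0 ^ (m + 1) * y0 := by
    rw [show m + 2 = (m + 1) + 1 from rfl, pow_succ]
  have hfact : y0 ^ 2 - y0 - 1 = ε ^ 2 + ε - 1 := by rw [hy0]; ring
  have hneg : ε ^ 2 + ε - 1 < 0 := by nlinarith
  have hm1 : (2:ℝ) ≤ (m:ℝ) + 1 := by
    have : (1:ℝ) ≤ (m:ℝ) := by exact_mod_cast hm
    linarith
  have hbra : 1 + ε + ((m:ℝ) + 1) * (ε ^ 2 + ε - 1) < 0 := by nlinarith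
  have hPy0 : y0 ^ (m + 3) - y0 ^ (m + 2) - y0 ^ (m + 1) + 1 < 0 := by
    have h5 : y0 ^ (m + 1) * (ε ^ 2 + ε - 1) ≤ (1 + ((m:ℝ) + 1) * ε) * (ε ^ 2 + ε - 1) :=
      mul_le_mul_of_nonpos_right hBn hneg.le
    have hexp : (1 + ((m:ℝ) + 1) * ε) * (ε ^ 2 + ε - 1) + 1 =
        ε * (1 + ε + ((m:ℝ) + 1) * (ε ^ 2 + ε - 1)) := by ring
    have h6 : (1 + ((m:ℝ) + 1) * ε) * (ε ^ 2 + ε - 1) + 1 < 0 := by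
      rw [hexp]; exact mul_neg_of_pos_of_neg hε0 hbra
    calc y0 ^ (m + 3) - y0 ^ (m + 2) - y0 ^ (m + 1) + 1
        = y0 ^ (m + 1) * (y0 ^ 2 - y0 - 1) + 1 := by rw [e3, e2]; ring
    _ = y0 ^ (m + 1) * (ε ^ 2 + ε - 1) + 1 := by rw [hfact]
    _ ≤ (1 + ((m:ℝ) + 1) * ε) * (ε ^ 2 + ε - 1) + 1 := by linarith
    _ < 0 := h6
  have hcont : ContinuousOn (fun y : ℝ => y ^ (m + 3) - y ^ (m + 2) - y ^ (m + 1) + 1)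
      (Set.Icc y0 β) := by fun_prop
  have hsub := intermediate_value_Icc hy0β hcont
  have h0mem : (0:ℝ) ∈ Set.Icc (y0 ^ (m + 3) - y0 ^ (m + 2) - y0 ^ (m + 1) + 1)
      (β ^ (m + 3) - β ^ (m + 2) - β ^ (m + 1) + 1) := ⟨hPy0.le, hc.le⟩
  obtain ⟨r, hr, hfr⟩ := hsub h0mem
  have hr1 : 1 < r := lt_of_lt_of_le hy01 hr.1
  have hlr : lam ≤ r := hlam.2.2 r hr1 hfr
  have hrβ : r ≤ β := hr.2
  have : r = lam := le_antisymm (hrβ.trans hβlam) hlr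
  rw [this] at hrβ
  have hβlam' : β = lam := le_antisymm hβlam hrβ
  have := hlam.2.1
  simp only at this
  rw [hβlam'] at hc
  linarith

end Numeric

end BetaAux

open BetaAux

theorem dimH_betaExpansions_ge_of_le_lambda
    (m : ℕ) (hm : 0 < m) (lam : ℝ)
    (hlam : IsSmallestRootGT1 (fun y => y ^ (m + 3) - y ^ (m + 2) - y ^ (m + 1) + 1) lam)
    (β : ℝ) (hβ : 1 < β) (hβlam : β ≤ lam)
    (x : ℝ) (hx : x ∈ Set.Ioo 0 (1 / (β - 1))) :
    (1 : ℝ≥0∞) / ((m + 2 : ℕ) : ℝ≥0∞) ≤ dimH (betaExpansions β x) := by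
  classical
  obtain ⟨hx0, hx1⟩ := hx
  have hx1' : x < cc β := hx1
  have hP := P_nonpos hm hlam hβ hβlam
  have hφ := sq_lt_of_P_nonpos hβ hP
  have hkey := key_of_P_nonpos hβ hP
  obtain ⟨N, hfirst⟩ := first hβ hφ hx0 hx1'
  set Creal := 2 * (2:ℝ) ^ (((N:ℝ) + m + 2) / ((m:ℝ) + 2)) with hCreal
  have hC0 : 0 ≤ Creal := by positivity
  set r : ℝ≥0 := ((m : ℝ≥0) + 2)⁻¹ with hr
  have hm2 : (0:ℝ≥0) < (m : ℝ≥0) + 2 := by positivity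
  have hr0 : 0 < r := by rw [hr]; positivity
  have hrc : (r : ℝ) = ((m:ℝ) + 2)⁻¹ := by
    rw [hr, NNReal.coe_inv]; push_cast; ring
  have hHolder : HolderOnWith Creal.toNNReal r (psi β x) (Set.range (enc β x)) := by
    intro a _ b _
    rw [edist_dist, edist_dist, Real.dist_eq]
    have hb := psi_holder_bound hβ hφ hkey hfirst a b
    have hd0 : (0:ℝ) ≤ dist a b := dist_nonneg
    calc ENNReal.ofReal |psi β x a - psi β x b|
        ≤ ENNReal.ofReal (Creal * dist a b ^ (((m:ℝ) + 2)⁻¹)) := ENNReal.ofReal_le_ofReal hb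
    _ = ENNReal.ofReal Creal * ENNReal.ofReal (dist a b ^ (((m:ℝ) + 2)⁻¹)) :=
        ENNReal.ofReal_mul hC0
    _ = ↑Creal.toNNReal * ENNReal.ofReal (dist a b) ^ ((r : ℝ)) := by
        rw [← ENNReal.ofReal_rpow_of_nonneg hd0 (by positivity), hrc]
        rfl
  have h1 := hHolder.dimH_image_le hr0
  have h2 : Set.Icc (0:ℝ) 1 ⊆ (psi β x) '' (Set.range (enc β x)) := by
    rintro t ⟨ht0, ht1⟩
    refine ⟨enc β x (bsig t), Set.mem_range_self _, ?_⟩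
    rw [psi_enc hβ hφ hkey (hfirst _), binVal_bsig ht0 ht1]
  have h3 : dimH (Set.Icc (0:ℝ) 1) = 1 := by
    rw [Real.dimH_of_mem_nhds
      (Icc_mem_nhds (by norm_num) (by norm_num) : Set.Icc (0:ℝ) 1 ∈ nhds (1/2 : ℝ))]
    simp
  have h4 : (1:ℝ≥0∞) ≤ dimH ((psi β x) '' (Set.range (enc β x))) := h3 ▸ dimH_mono h2
  have h5 : (1:ℝ≥0∞) ≤ dimH (Set.range (enc β x)) / r := le_trans h4 h1
  have h6 : (r : ℝ≥0∞) ≤ dimH (Set.range (enc β x)) := by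
    rw [ENNReal.le_div_iff_mul_le (Or.inl (by exact_mod_cast hr0.ne'))
      (Or.inl ENNReal.coe_ne_top), one_mul] at h5
    exact h5
  have h7 : Set.range (enc β x) ⊆ betaExpansions β x := by
    rintro _ ⟨σ, rfl⟩; exact enc_mem hβ hφ hx0 hx1'
  refine le_trans ?_ (le_trans h6 (dimH_mono h7))
  rw [one_div, hr, ENNReal.coe_inv hm2.ne']
  apply le_of_eq
  congr 1
  push_cast
  ring
end

section
/- Let β > 1, let k be a natural number, and let (a_1,…,a_{2k+1}) be a (2k+1)-tuple of maps from {T_{0,β}, T_{1,β}}. If at least k+1 of the a_n equal T_{0,β}, then for all real x, a_{2k+1} ∘ ⋯ ∘ a_1(x) ≥ (T_{0,β}^{k+1} ∘ T_{1,β}^{k})(x). If at least k+1 of the a_n equal T_{1,β}, then for all real x, a_{2k+1} ∘ ⋯ ∘ a_1(x) ≤ (T_{1,β}^{k+1} ∘ T_{0,β}^{k})(x). -/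
/-- `Tmap β false = T_{0,β} : y ↦ βy` and `Tmap β true = T_{1,β} : y ↦ βy - 1`. -/
def Tmap (β : ℝ) (b : Bool) : ℝ → ℝ := fun y => β * y - if b then 1 else 0

/-- For a tuple `a = (a_1, …, a_j)` of maps from `{T_{0,β}, T_{1,β}}` (encoded by
booleans), `compTuple β a x = a_j ∘ ⋯ ∘ a_1 (x)`: the maps are applied in order of
increasing index. -/
def compTuple (β : ℝ) {j : ℕ} (a : Fin j → Bool) (x : ℝ) : ℝ :=
  (List.ofFn fun i => Tmap β (a i)).foldl (fun y f => f y) x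


lemma compTuple_formula (β : ℝ) : ∀ {j : ℕ} (a : Fin j → Bool) (x : ℝ),
    compTuple β a x = β ^ j * x - ∑ i : Fin j, (if a i then β ^ (j - 1 - i.val) else 0) := by
  intro j
  induction j with
  | zero => intro a x; simp [compTuple]
  | succ j ih =>
    intro a x
    have hstep : compTuple β a x = compTuple β (fun i => a i.succ) (Tmap β (a 0) x) := by
      simp [compTuple, List.ofFn_succ]
    rw [hstep, ih]
    rw [Fin.sum_univ_succ]
    have hexp : ∀ i : Fin j, (j + 1 - 1 - (i.succ : Fin (j+1)).val) = j - 1 - i.val := by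
      intro i; simp [Fin.val_succ]; omega
    have hsum : ∑ i : Fin j, (if a i.succ then β ^ (j + 1 - 1 - (i.succ : Fin (j+1)).val) else 0)
        = ∑ i : Fin j, (if a i.succ then β ^ (j - 1 - i.val) else 0) := by
      exact Finset.sum_congr rfl fun i _ => by rw [hexp i]
    rw [hsum]
    have h0 : (j + 1 - 1 - ((0 : Fin (j+1))).val) = j := by simp
    rw [h0]
    cases h : a 0 <;> simp [Tmap, h, pow_succ] <;> ring

lemma iter0 (β : ℝ) (m : ℕ) (x : ℝ) : (fun y : ℝ => β * y)^[m] x = β ^ m * x := by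
  induction m with
  | zero => simp
  | succ m ih => rw [Function.iterate_succ_apply', ih, pow_succ]; ring

lemma iter1 (β : ℝ) (m : ℕ) (x : ℝ) :
    (fun y : ℝ => β * y - 1)^[m] x = β ^ m * x - ∑ e ∈ Finset.range m, β ^ e := by
  induction m with
  | zero => simp
  | succ m ih =>
    rw [Function.iterate_succ_apply', ih]
    have h1 : β * ∑ e ∈ Finset.range m, β ^ e = ∑ e ∈ Finset.range m, β ^ (e+1) := by
      rw [Finset.mul_sum]; exact Finset.sum_congr rfl fun e _ => by ring
    rw [Finset.sum_range_succ']
    simp only [mul_sub, h1, pow_succ, pow_zero]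
    ring

/-- converting sums over filtered `Fin` universe to sums over filtered ranges -/
lemma fin_filter_sum (n : ℕ) (p : ℕ → Prop) [DecidablePred p] (f : ℕ → ℝ) :
    ∑ i ∈ Finset.univ.filter (fun i : Fin n => p i.val), f i.val
      = ∑ e ∈ (Finset.range n).filter p, f e := by
  rw [Finset.sum_filter, Fin.sum_univ_eq_sum_range (fun e => if p e then f e else 0),
    ← Finset.sum_filter]

lemma card_H (k : ℕ) : (Finset.univ.filter (fun i : Fin (2*k+1) => i.val < k)).card = k := by
  rw [Finset.card_filter]
  rw [Fin.sum_univ_eq_sum_range (fun e => if e < k then 1 else 0)]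
  rw [← Finset.sum_filter,
    show ((Finset.range (2*k+1)).filter (fun e => e < k)) = Finset.range k by ext e; simp; omega]
  simp

lemma card_L (k : ℕ) : (Finset.univ.filter (fun i : Fin (2*k+1) => ¬ i.val < k)).card = k + 1 := by
  have := Finset.card_filter_add_card_filter_not (s := (Finset.univ : Finset (Fin (2*k+1))))
    (p := fun i : Fin (2*k+1) => i.val < k)
  simp only [Finset.card_univ, Fintype.card_fin] at this
  have h := card_H k
  omega

lemma sum_H (β : ℝ) (k : ℕ) :
    ∑ i ∈ Finset.univ.filter (fun i : Fin (2*k+1) => i.val < k), β ^ (2*k - i.val)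
      = ∑ e ∈ Finset.range k, β ^ (e + (k + 1)) := by
  rw [fin_filter_sum (2*k+1) (fun e => e < k) (fun e => β ^ (2*k - e)),
    show ((Finset.range (2*k+1)).filter (fun e => e < k)) = Finset.range k by ext e; simp; omega]
  rw [← Finset.sum_range_reflect (fun e => β ^ (e + (k+1))) k]
  exact Finset.sum_congr rfl fun e he => by
    rw [Finset.mem_range] at he; congr 1; omega

lemma sum_L (β : ℝ) (k : ℕ) :
    ∑ i ∈ Finset.univ.filter (fun i : Fin (2*k+1) => ¬ i.val < k), β ^ (2*k - i.val)
      = ∑ e ∈ Finset.range (k+1), β ^ e := by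
  have htot : ∑ i : Fin (2*k+1), β ^ (2*k - i.val)
      = ∑ e ∈ Finset.range (k+1), β ^ e + ∑ e ∈ Finset.range k, β ^ (e + (k+1)) := by
    rw [Fin.sum_univ_eq_sum_range (fun e => β ^ (2*k - e))]
    have hrefl : ∑ e ∈ Finset.range (2*k+1), β ^ (2*k - e)
        = ∑ e ∈ Finset.range (2*k+1), β ^ e := by
      rw [← Finset.sum_range_reflect (fun e => β ^ e) (2*k+1)]
      exact Finset.sum_congr rfl fun e _ => by congr 1 <;> omega
    rw [hrefl, show 2*k+1 = (k+1) + k by ring, Finset.sum_range_add]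
    congr 1
    exact Finset.sum_congr rfl fun e _ => by congr 1 <;> omega
  have hsplit := Finset.sum_filter_add_sum_filter_not (Finset.univ : Finset (Fin (2*k+1)))
    (fun i => i.val < k) (fun i => β ^ (2*k - i.val))
  rw [sum_H β k] at hsplit
  rw [htot] at hsplit
  linarith

lemma key_le (β : ℝ) (hβ : 1 < β) (k : ℕ) (S : Finset (Fin (2*k+1))) (hS : S.card ≤ k) :
    ∑ i ∈ S, β ^ (2*k - i.val)
      ≤ ∑ i ∈ Finset.univ.filter (fun i : Fin (2*k+1) => i.val < k), β ^ (2*k - i.val) := by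
  have hβ1 : (1:ℝ) ≤ β := hβ.le
  set f : Fin (2*k+1) → ℝ := fun i => β ^ (2*k - i.val) with hf
  set H := Finset.univ.filter (fun i : Fin (2*k+1) => i.val < k) with hH
  set Shi := S.filter (fun i => i.val < k) with hShi
  set Slo := S.filter (fun i => ¬ i.val < k) with hSlo
  have hsub : Shi ⊆ H := Finset.filter_subset_filter _ (Finset.subset_univ S)
  have hSsplit : ∑ i ∈ Shi, f i + ∑ i ∈ Slo, f i = ∑ i ∈ S, f i :=
    Finset.sum_filter_add_sum_filter_not S _ f
  have hHsplit : ∑ i ∈ H \ Shi, f i + ∑ i ∈ Shi, f i = ∑ i ∈ H, f i :=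
    Finset.sum_sdiff hsub
  have hcards : Shi.card + Slo.card = S.card :=
    Finset.card_filter_add_card_filter_not _
  have hcardM : (H \ Shi).card = k - Shi.card := by
    rw [Finset.card_sdiff_of_subset hsub, card_H]
  have hShiH : Shi.card ≤ k := by
    have := Finset.card_le_card hsub; rwa [card_H] at this
  have hcardle : Slo.card ≤ (H \ Shi).card := by omega
  have h1 : ∑ i ∈ Slo, f i ≤ Slo.card • β ^ k := by
    apply Finset.sum_le_card_nsmul
    intro i hi
    rw [hSlo, Finset.mem_filter] at hi
    exact pow_le_pow_right₀ hβ1 (by omega)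
  have h2 : (H \ Shi).card • β ^ (k+1) ≤ ∑ i ∈ H \ Shi, f i := by
    apply Finset.card_nsmul_le_sum
    intro i hi
    have hiH : i ∈ H := (Finset.mem_sdiff.mp hi).1
    rw [hH, Finset.mem_filter] at hiH
    exact pow_le_pow_right₀ hβ1 (by omega)
  have h3 : (Slo.card : ℝ) * β ^ k ≤ ((H \ Shi).card : ℝ) * β ^ (k+1) := by
    apply mul_le_mul (Nat.cast_le.mpr hcardle) (pow_le_pow_right₀ hβ1 (Nat.le_succ k))
      (pow_nonneg (by linarith) k) (Nat.cast_nonneg _)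
  simp only [nsmul_eq_mul] at h1 h2
  linarith

lemma key_ge (β : ℝ) (hβ : 1 < β) (k : ℕ) (S : Finset (Fin (2*k+1))) (hS : k + 1 ≤ S.card) :
    ∑ i ∈ Finset.univ.filter (fun i : Fin (2*k+1) => ¬ i.val < k), β ^ (2*k - i.val)
      ≤ ∑ i ∈ S, β ^ (2*k - i.val) := by
  have hβ1 : (1:ℝ) ≤ β := hβ.le
  set f : Fin (2*k+1) → ℝ := fun i => β ^ (2*k - i.val) with hf
  set L := Finset.univ.filter (fun i : Fin (2*k+1) => ¬ i.val < k) with hL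
  set Slo := S.filter (fun i => ¬ i.val < k) with hSlo
  set Shi := S.filter (fun i => i.val < k) with hShi
  have hsub : Slo ⊆ L := Finset.filter_subset_filter _ (Finset.subset_univ S)
  have hSsplit : ∑ i ∈ Shi, f i + ∑ i ∈ Slo, f i = ∑ i ∈ S, f i :=
    Finset.sum_filter_add_sum_filter_not S _ f
  have hLsplit : ∑ i ∈ L \ Slo, f i + ∑ i ∈ Slo, f i = ∑ i ∈ L, f i :=
    Finset.sum_sdiff hsub
  have hcards : Shi.card + Slo.card = S.card :=
    Finset.card_filter_add_card_filter_not _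
  have hScard : S.card ≤ 2*k+1 := by
    have := Finset.card_le_card (Finset.subset_univ S)
    simpa using this
  have hcardM : (L \ Slo).card = (k+1) - Slo.card := by
    rw [Finset.card_sdiff_of_subset hsub, card_L]
  have hSloL : Slo.card ≤ k + 1 := by
    have := Finset.card_le_card hsub; rwa [card_L] at this
  have hcardle : (L \ Slo).card ≤ Shi.card := by omega
  have h1 : ∑ i ∈ L \ Slo, f i ≤ (L \ Slo).card • β ^ k := by
    apply Finset.sum_le_card_nsmul
    intro i hi
    have hiL : i ∈ L := (Finset.mem_sdiff.mp hi).1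
    rw [hL, Finset.mem_filter] at hiL
    exact pow_le_pow_right₀ hβ1 (by omega)
  have h2 : Shi.card • β ^ (k+1) ≤ ∑ i ∈ Shi, f i := by
    apply Finset.card_nsmul_le_sum
    intro i hi
    rw [hShi, Finset.mem_filter] at hi
    exact pow_le_pow_right₀ hβ1 (by omega)
  have h3 : ((L \ Slo).card : ℝ) * β ^ k ≤ (Shi.card : ℝ) * β ^ (k+1) := by
    apply mul_le_mul (Nat.cast_le.mpr hcardle) (pow_le_pow_right₀ hβ1 (Nat.le_succ k))
      (pow_nonneg (by linarith) k) (Nat.cast_nonneg _)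
  simp only [nsmul_eq_mul] at h1 h2
  linarith

lemma compTuple_eq (β : ℝ) (k : ℕ) (a : Fin (2*k+1) → Bool) (x : ℝ) :
    compTuple β a x = β ^ (2*k+1) * x
      - ∑ i ∈ Finset.univ.filter (fun i => a i = true), β ^ (2*k - i.val) := by
  rw [compTuple_formula, Finset.sum_filter]
  congr 1


theorem compTuple_extremal_bounds (β : ℝ) (hβ : 1 < β) (k : ℕ)
    (a : Fin (2 * k + 1) → Bool) :
    (k + 1 ≤ (Finset.univ.filter fun i => a i = false).card →
      ∀ x : ℝ,
        (fun y : ℝ => β * y)^[k + 1] ((fun y : ℝ => β * y - 1)^[k] x) ≤ compTuple β a x) ∧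
    (k + 1 ≤ (Finset.univ.filter fun i => a i = true).card →
      ∀ x : ℝ,
        compTuple β a x ≤ (fun y : ℝ => β * y - 1)^[k + 1] ((fun y : ℝ => β * y)^[k] x)) := by

  have hcards : (Finset.univ.filter fun i : Fin (2*k+1) => a i = true).card
      + (Finset.univ.filter fun i : Fin (2*k+1) => a i = false).card = 2*k+1 := by
    have := Finset.card_filter_add_card_filter_not
      (s := (Finset.univ : Finset (Fin (2*k+1)))) (p := fun i => a i = true)
    simpa [Bool.not_eq_true] using this
  have hpow : β ^ (k+1) * β ^ k = β ^ (2*k+1) := by rw [← pow_add]; congr 1; ring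
  constructor
  · intro hfalse x
    have htrue : (Finset.univ.filter fun i : Fin (2*k+1) => a i = true).card ≤ k := by omega
    rw [iter0, iter1, compTuple_eq]
    have hle := (key_le β hβ k _ htrue).trans_eq (sum_H β k)
    have hmul : β ^ (k+1) * (β ^ k * x - ∑ e ∈ Finset.range k, β ^ e)
        = β ^ (2*k+1) * x - ∑ e ∈ Finset.range k, β ^ (e + (k+1)) := by
      rw [mul_sub, ← mul_assoc, hpow, Finset.mul_sum]
      congr 1
      exact Finset.sum_congr rfl fun e _ => by rw [← pow_add, add_comm]
    rw [hmul]
    linarith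
  · intro htrue x
    rw [iter0, iter1, compTuple_eq]
    have hge := (sum_L β k).symm.trans_le (key_ge β hβ k _ htrue)
    rw [← mul_assoc, hpow]
    linarith
end

section
/- For every positive integer m and every real β with 1 < β ≤ ω_m, one has β^{4m+3} - β^{2m+2} - β^{m+2} - β^{m+1} + β + 1 ≤ 0. -/
theorem poly_nonpos_of_le_omega (m : ℕ) (hm : 0 < m) (ω₁ ω₂ ω₃ : ℝ)
    (h₁ : IsSmallestRootGT1
      (fun y => y ^ (4 * m + 3) - y ^ (2 * m + 2) - y ^ (m + 2) - y ^ (m + 1) + y + 1) ω₁)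
    (h₂ : IsSmallestRootGT1 (fun y => y ^ (2 * m + 3) - y ^ (2 * m + 2) - y ^ 2 + 1) ω₂)
    (h₃ : IsSmallestRootGT1 (fun y => y ^ (2 * m + 3) - y - 1) ω₃)
    (β : ℝ) (hβ : 1 < β) (hβω : β ≤ min ω₁ (min ω₂ ω₃)) :
    β ^ (4 * m + 3) - β ^ (2 * m + 2) - β ^ (m + 2) - β ^ (m + 1) + β + 1 ≤ 0 := by
  set f : ℝ → ℝ := fun y => y ^ (4 * m + 3) - y ^ (2 * m + 2) - y ^ (m + 2) - y ^ (m + 1) + y + 1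
    with hf
  obtain ⟨hω₁, hroot, hmin⟩ := h₁
  have hβω₁ : β ≤ ω₁ := le_trans hβω (min_le_left _ _)
  by_contra hpos
  push_neg at hpos
  have hposβ : 0 < f β := hpos
  have hcont : Continuous f := by fun_prop
  have hf1 : f 1 = 0 := by simp [hf]
  -- derivative of f at 1 is -1
  have hd : HasDerivAt f (-1) 1 := by
    have h0 := (((((hasDerivAt_pow (4*m+3) (1:ℝ)).sub (hasDerivAt_pow (2*m+2) 1)).sub
      (hasDerivAt_pow (m+2) 1)).sub (hasDerivAt_pow (m+1) 1)).add (hasDerivAt_id 1)).add_const 1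
    simp only [one_pow, mul_one, id_eq, add_zero] at h0
    have heq : ((4*m+3 : ℕ) : ℝ) - (2*m+2 : ℕ) - (m+2 : ℕ) - (m+1 : ℕ) + 1 = -1 := by
      push_cast; ring
    rw [heq] at h0
    exact h0
  -- hence f is negative just to the right of 1
  have hslope : Filter.Tendsto (slope f 1) (nhdsWithin 1 (Set.Ioi 1)) (nhds (-1)) :=
    (hasDerivAt_iff_tendsto_slope.mp hd).mono_left
      (nhdsWithin_mono 1 (by intro x hx; exact ne_of_gt hx))
  have hev : ∀ᶠ t in nhdsWithin 1 (Set.Ioi 1), slope f 1 t < 0 :=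
    hslope.eventually_lt_const (by norm_num)
  have hev2 : ∀ᶠ t in nhdsWithin 1 (Set.Ioi 1), t ∈ Set.Ioo 1 β :=
    Ioo_mem_nhdsGT_of_mem ⟨le_refl 1, hβ⟩
  obtain ⟨t, hts, htI⟩ := ((hev.and hev2).exists)
  have ht1 : 1 < t := htI.1
  have htβ : t < β := htI.2
  have hft : f t < 0 := by
    rw [slope_def_field, hf1, sub_zero] at hts
    rcases div_neg_iff.mp hts with ⟨_, h⟩ | ⟨h, _⟩
    · linarith
    · exact h
  -- intermediate value: root in (t, β)
  have hsub : Set.Ioo (f t) (f β) ⊆ f '' Set.Ioo t β :=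
    intermediate_value_Ioo (le_of_lt htβ) hcont.continuousOn
  obtain ⟨c, hcI, hfc⟩ := hsub ⟨hft, hposβ⟩
  have hc1 : 1 < c := lt_trans ht1 hcI.1
  have := hmin c hc1 hfc
  linarith [hcI.2]
end

section
/- For every positive integer m and every real β with 1 < β ≤ ω_m, the (2m+1)-th iterate of T_{0,β}(x) = βx satisfies T_{0,β}^{2m+1}(β/(β²-1)) = β^{2m+2}/(β²-1), and moreover β^{2m+2}/(β²-1) ≤ 1/(β-1), i.e. this point lies in [0, 1/(β-1)]. -/
theorem iterate_T0_mem_of_le_omega (m : ℕ) (hm : 0 < m) (ω₁ ω₂ ω₃ : ℝ)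
    (h₁ : IsSmallestRootGT1
      (fun y => y ^ (4 * m + 3) - y ^ (2 * m + 2) - y ^ (m + 2) - y ^ (m + 1) + y + 1) ω₁)
    (h₂ : IsSmallestRootGT1 (fun y => y ^ (2 * m + 3) - y ^ (2 * m + 2) - y ^ 2 + 1) ω₂)
    (h₃ : IsSmallestRootGT1 (fun y => y ^ (2 * m + 3) - y - 1) ω₃)
    (β : ℝ) (hβ : 1 < β) (hβω : β ≤ min ω₁ (min ω₂ ω₃)) :
    (fun y : ℝ => β * y)^[2 * m + 1] (β / (β ^ 2 - 1)) = β ^ (2 * m + 2) / (β ^ 2 - 1) ∧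
      β ^ (2 * m + 2) / (β ^ 2 - 1) ≤ 1 / (β - 1) := by
  have hβ3 : β ≤ ω₃ := hβω.trans ((min_le_right _ _).trans (min_le_right _ _))
  have hne : β ^ 2 - 1 ≠ 0 := by nlinarith
  constructor
  · have hit : ∀ n : ℕ, ∀ x : ℝ, (fun y : ℝ => β * y)^[n] x = β ^ n * x := by
      intro n
      induction n with
      | zero => intro x; simp
      | succ k ih =>
        intro x
        rw [Function.iterate_succ_apply, ih]
        ring
    rw [hit]
    field_simp
    ring
  · -- key: β ^ (2m+3) ≤ β + 1
    set f : ℝ → ℝ := fun y => y ^ (2 * m + 3) - y - 1 with hf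
    have hfle : f β ≤ 0 := by
      by_contra h
      push_neg at h
      have hcont : ContinuousOn f (Set.Icc 1 β) := (Continuous.continuousOn (by
        simp only [hf]; continuity))
      have h1 : f 1 = -1 := by simp [hf]
      have hmem : (0 : ℝ) ∈ Set.Ioo (f 1) (f β) := by rw [h1]; constructor <;> linarith
      obtain ⟨c, hc, hfc⟩ := intermediate_value_Ioo hβ.le hcont hmem
      have := h₃.2.2 c hc.1 hfc
      linarith [hc.2, hβ3]
    have hkey : β ^ (2 * m + 2) ≤ β + 1 := by
      have : β ^ (2 * m + 2) ≤ β ^ (2 * m + 3) :=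
        pow_le_pow_right₀ hβ.le (by omega)
      have hf3 : β ^ (2 * m + 3) - β - 1 ≤ 0 := hfle
      linarith
    rw [div_le_div_iff₀ (by nlinarith) (by linarith)]
    nlinarith
end

section
/- For every positive integer m and every real β with 1 < β ≤ ω_m, the (2m+1)-th iterate of T_{1,β}(x) = βx - 1 satisfies T_{1,β}^{2m+1}(β/(β²-1)) = (-β^{2m+1} + β + 1)/(β²-1), and moreover (-β^{2m+1} + β + 1)/(β²-1) ≥ 0, i.e. this point lies in [0, 1/(β-1)]. -/
lemma sub_le_pow_sub_pow' {a b : ℝ} {k : ℕ} (hk : 1 ≤ k) (ha : 1 ≤ a) (hab : a ≤ b) :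
    b - a ≤ b ^ k - a ^ k := by
  have hgs := geom_sum₂_mul b a k
  have hS : (1 : ℝ) ≤ ∑ i ∈ Finset.range k, b ^ i * a ^ (k - 1 - i) := by
    calc (1 : ℝ) ≤ (k : ℝ) := by exact_mod_cast hk
    _ = ∑ _i ∈ Finset.range k, (1 : ℝ) := by simp
    _ ≤ _ := by
        apply Finset.sum_le_sum
        intro i _
        have h1 : (1:ℝ) ≤ b ^ i := one_le_pow₀ (le_trans ha hab)
        have h2 : (1:ℝ) ≤ a ^ (k - 1 - i) := one_le_pow₀ ha
        nlinarith
  nlinarith [sub_nonneg.mpr hab]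

theorem iterate_T1_mem_of_le_omega (m : ℕ) (hm : 0 < m) (ω₁ ω₂ ω₃ : ℝ)
    (h₁ : IsSmallestRootGT1
      (fun y => y ^ (4 * m + 3) - y ^ (2 * m + 2) - y ^ (m + 2) - y ^ (m + 1) + y + 1) ω₁)
    (h₂ : IsSmallestRootGT1 (fun y => y ^ (2 * m + 3) - y ^ (2 * m + 2) - y ^ 2 + 1) ω₂)
    (h₃ : IsSmallestRootGT1 (fun y => y ^ (2 * m + 3) - y - 1) ω₃)
    (β : ℝ) (hβ : 1 < β) (hβω : β ≤ min ω₁ (min ω₂ ω₃)) :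
    (fun y : ℝ => β * y - 1)^[2 * m + 1] (β / (β ^ 2 - 1)) =
        (-β ^ (2 * m + 1) + β + 1) / (β ^ 2 - 1) ∧
      0 ≤ (-β ^ (2 * m + 1) + β + 1) / (β ^ 2 - 1) := by
  have hd : β ^ 2 - 1 > 0 := by nlinarith
  have hd' : β ^ 2 - 1 ≠ 0 := ne_of_gt hd
  constructor
  · have key : ∀ n : ℕ, (fun y : ℝ => β * y - 1)^[n] (β / (β ^ 2 - 1)) =
        (-β ^ n + β + 1) / (β ^ 2 - 1) := by
      intro n
      induction n with
      | zero => simp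
      | succ n ih =>
        rw [Function.iterate_succ_apply', ih]
        field_simp
        ring
    exact key (2 * m + 1)
  · apply div_nonneg _ (le_of_lt hd)
    -- need β ^ (2m+1) ≤ β + 1
    obtain ⟨hω3, hroot, _⟩ := h₃
    have hβ3 : β ≤ ω₃ := le_trans hβω (le_trans (min_le_right _ _) (min_le_right _ _))
    have hωpow : ω₃ ^ (2 * m + 1) ≤ ω₃ ^ (2 * m + 3) :=
      pow_le_pow_right₀ (le_of_lt hω3) (by omega)
    have hroot' : ω₃ ^ (2 * m + 3) - ω₃ - 1 = 0 := hroot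
    have hmono : ω₃ - β ≤ ω₃ ^ (2 * m + 1) - β ^ (2 * m + 1) :=
      sub_le_pow_sub_pow' (by omega) (le_of_lt hβ) hβ3
    linarith
end

section
/- The sequence (ω_m)_{m≥1} is strictly decreasing and converges to 1. -/
open Set Filter

lemma ivt_root_lt {P : ℝ → ℝ} (hP : Continuous P) {r t b : ℝ}
    (hr : IsSmallestRootGT1 P r) (ht1 : 1 < t) (htb : t < b) (hPt : P t < 0) (hPb : 0 < P b) :
    r < b := by
  obtain ⟨c, hc, hPc⟩ := intermediate_value_Icc htb.le hP.continuousOn ⟨hPt.le, hPb.le⟩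
  have hc1 : 1 < c := lt_of_lt_of_le ht1 hc.1
  have hcb : c < b := lt_of_le_of_ne hc.2 (by rintro rfl; exact hPb.ne' hPc)
  exact lt_of_le_of_lt (hr.2.2 c hc1 hPc) hcb

lemma neg_below_root {P : ℝ → ℝ} (hP : Continuous P) {r : ℝ}
    (hr : IsSmallestRootGT1 P r)
    (hneg : ∀ c, 1 < c → ∃ t, 1 < t ∧ t < c ∧ P t < 0) :
    ∀ y, 1 < y → y < r → P y < 0 := by
  intro y hy1 hyr
  by_contra hcon
  push_neg at hcon
  obtain ⟨t, ht1, hty, hPt⟩ := hneg y hy1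
  obtain ⟨c, hc, hPc⟩ := intermediate_value_Icc hty.le hP.continuousOn ⟨hPt.le, hcon⟩
  have : r ≤ c := hr.2.2 c (lt_of_lt_of_le ht1 hc.1) hPc
  linarith [hc.2]

lemma exists_neg_of_neg_at_one {P : ℝ → ℝ} (hP : Continuous P) (h1 : P 1 < 0) :
    ∀ c, 1 < c → ∃ t, 1 < t ∧ t < c ∧ P t < 0 := by
  intro c hc
  have h2 : ∀ᶠ t in nhdsWithin (1:ℝ) (Set.Ioi 1), P t < 0 :=
    eventually_nhdsWithin_of_eventually_nhds ((hP.tendsto 1).eventually (Iio_mem_nhds h1))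
  have h3 : ∀ᶠ t in nhdsWithin (1:ℝ) (Set.Ioi 1), t ∈ Set.Ioo 1 c :=
    eventually_of_mem (Ioo_mem_nhdsGT_of_mem ⟨le_rfl, hc⟩) fun _ ht => ht
  obtain ⟨t, hPt, ht⟩ := (h2.and h3).exists
  exact ⟨t, ht.1, ht.2, hPt⟩

lemma exists_neg_of_deriv {P : ℝ → ℝ} (h0 : P 1 = 0) {d : ℝ} (hd : HasDerivAt P d 1)
    (hdneg : d < 0) : ∀ c, 1 < c → ∃ t, 1 < t ∧ t < c ∧ P t < 0 := by
  intro c hc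
  rw [hasDerivAt_iff_tendsto_slope] at hd
  have hmono : nhdsWithin (1:ℝ) (Set.Ioi 1) ≤ nhdsWithin 1 {(1:ℝ)}ᶜ :=
    nhdsWithin_mono _ (fun y hy => ne_of_gt hy)
  have h2 : ∀ᶠ t in nhdsWithin (1:ℝ) (Set.Ioi 1), slope P 1 t < 0 :=
    (hd.mono_left hmono).eventually (Iio_mem_nhds hdneg)
  have h3 : ∀ᶠ t in nhdsWithin (1:ℝ) (Set.Ioi 1), t ∈ Set.Ioo 1 c :=
    eventually_of_mem (Ioo_mem_nhdsGT_of_mem ⟨le_rfl, hc⟩) fun _ ht => ht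
  obtain ⟨t, hslope, ht⟩ := (h2.and h3).exists
  refine ⟨t, ht.1, ht.2, ?_⟩
  have ht1 : (0:ℝ) < t - 1 := by linarith [ht.1]
  rw [slope_def_field, h0, sub_zero] at hslope
  have := mul_neg_of_neg_of_pos hslope ht1
  rwa [div_mul_cancel₀] at this
  exact ht1.ne'

lemma deriv1 (n : ℕ) :
    HasDerivAt (fun y : ℝ => y ^ (4*n+3) - y ^ (2*n+2) - y ^ (n+2) - y ^ (n+1) + y + 1) (-1) 1 := by
  have h := (((((hasDerivAt_pow (4*n+3) (1:ℝ)).sub (hasDerivAt_pow (2*n+2) 1)).sub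
    (hasDerivAt_pow (n+2) 1)).sub (hasDerivAt_pow (n+1) 1)).add (hasDerivAt_id 1)).add_const 1
  refine h.congr_deriv ?_
  simp only [one_pow, mul_one]
  push_cast
  ring

lemma C1 {x : ℝ} (hx : 1 < x) {m n : ℕ} (hmn : m < n)
    (hroot : x ^ (2*m+3) - x - 1 = 0) :
    0 < x ^ (4*n+3) - x ^ (2*n+2) - x ^ (n+2) - x ^ (n+1) + x + 1 := by
  obtain ⟨k, rfl⟩ : ∃ k, n = m + 1 + k := ⟨n - (m+1), by omega⟩
  have hx0 : (0:ℝ) < x := by linarith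
  have hx1 : x + 1 = x ^ (2*m+3) := by linarith
  have step : x ^ (2*m+3) * (x ^ (2*k+1) - 1) < x ^ (3*m+k+5) * (x ^ (m+3*k+2) - 1) := by
    apply mul_lt_mul (pow_lt_pow_right₀ hx (by omega))
      (sub_le_sub_right (pow_le_pow_right₀ hx.le (by omega)) 1)
      (sub_pos.2 (one_lt_pow₀ hx (by omega))) (le_of_lt (pow_pos hx0 _))
  have g1 : x ^ (2*m+3) * (x ^ (2*k+1) - 1) = x ^ (2*m+2*k+4) - x ^ (2*m+3) := by ring
  have g2 : x ^ (3*m+k+5) * (x ^ (m+3*k+2) - 1) = x ^ (4*m+4*k+7) - x ^ (3*m+k+5) := by ring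
  have g5 : x ^ (m+1+k+2) + x ^ (m+1+k+1) = x ^ (3*m+k+5) := by
    have e : x ^ (m+1+k+2) + x ^ (m+1+k+1) = x ^ (m+k+2) * (x + 1) := by ring
    rw [e, hx1]; ring
  have e_a : x ^ (4*(m+1+k)+3) = x ^ (4*m+4*k+7) := by ring
  have e_b : x ^ (2*(m+1+k)+2) = x ^ (2*m+2*k+4) := by ring
  rw [g1, g2] at step
  linarith [step, g5, e_a, e_b, hx1]

lemma C2 {x : ℝ} (hx : 1 < x) {m n : ℕ} (hmn : m < n)
    (hroot : x ^ (4*m+3) - x ^ (2*m+2) - x ^ (m+2) - x ^ (m+1) + x + 1 = 0) :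
    0 < x ^ (4*n+3) - x ^ (2*n+2) - x ^ (n+2) - x ^ (n+1) + x + 1 := by
  obtain ⟨d, rfl⟩ : ∃ d, n = m + (d+1) := ⟨n - (m+1), by omega⟩
  have hx0 : (0:ℝ) < x := by linarith
  set t := x ^ (d+1) with htdef
  have ht : 1 < t := one_lt_pow₀ hx (by omega)
  have hquart : t^2 - 1 + 2*(t-1) < t^4 - 1 := by
    nlinarith [sq_nonneg (t-1), sq_nonneg t, sq_nonneg (t+1)]
  have e1 : x ^ (4*(m+(d+1))+3) = x ^ (4*m+3) * t^4 := by rw [htdef]; ring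
  have e2 : x ^ (2*(m+(d+1))+2) = x ^ (2*m+2) * t^2 := by rw [htdef]; ring
  have e3 : x ^ (m+(d+1)+2) = x ^ (m+2) * t := by rw [htdef]; ring
  have e4 : x ^ (m+(d+1)+1) = x ^ (m+1) * t := by rw [htdef]; ring
  have p1 : x ^ (2*m+2) ≤ x ^ (4*m+3) := pow_le_pow_right₀ hx.le (by omega)
  have p2 : x ^ (m+2) ≤ x ^ (4*m+3) := pow_le_pow_right₀ hx.le (by omega)
  have p3 : x ^ (m+1) ≤ x ^ (4*m+3) := pow_le_pow_right₀ hx.le (by omega)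
  have q1 : x ^ (2*m+2) * (t^2 - 1) ≤ x ^ (4*m+3) * (t^2 - 1) :=
    mul_le_mul_of_nonneg_right p1 (by nlinarith)
  have q2 : x ^ (m+2) * (t - 1) ≤ x ^ (4*m+3) * (t - 1) :=
    mul_le_mul_of_nonneg_right p2 (by linarith)
  have q3 : x ^ (m+1) * (t - 1) ≤ x ^ (4*m+3) * (t - 1) :=
    mul_le_mul_of_nonneg_right p3 (by linarith)
  have q4 : x ^ (4*m+3) * (t^2 - 1 + 2*(t-1)) < x ^ (4*m+3) * (t^4 - 1) :=
    mul_lt_mul_of_pos_left hquart (pow_pos hx0 _)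
  nlinarith [q1, q2, q3, q4, e1, e2, e3, e4, hroot]

lemma key32 (m : ℕ) {a₂ a₃ : ℝ}
    (h2 : IsSmallestRootGT1 (fun y => y ^ (2*m+3) - y ^ (2*m+2) - y ^ 2 + 1) a₂)
    (h3 : IsSmallestRootGT1 (fun y => y ^ (2*m+3) - y - 1) a₃) : a₃ < a₂ := by
  by_contra hcon
  push_neg at hcon
  have cont3 : Continuous fun y : ℝ => y ^ (2*m+3) - y - 1 := by fun_prop
  have hneg := neg_below_root cont3 h3 (exists_neg_of_neg_at_one cont3
    (by show (1:ℝ) ^ (2*m+3) - 1 - 1 < 0; norm_num))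
  have hx : 1 < a₂ := h2.1
  have h23 : a₂ ^ (2*m+3) ≤ a₂ + 1 := by
    rcases lt_or_eq_of_le hcon with hlt | heq
    · have h' : a₂ ^ (2*m+3) - a₂ - 1 < 0 := hneg a₂ hx hlt
      linarith
    · have h' : a₃ ^ (2*m+3) - a₃ - 1 = 0 := h3.2.1
      rw [← heq] at h'
      linarith
  have hroot2 : a₂ ^ (2*m+3) - a₂ ^ (2*m+2) - a₂ ^ 2 + 1 = 0 := h2.2.1
  have e : a₂ ^ (2*m+3) = a₂ ^ (2*m+2) * a₂ := by ring
  have hfac : (a₂ ^ (2*m+2) - a₂ - 1) * (a₂ - 1) = 0 := by linear_combination hroot2 - e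
  have hu : a₂ ^ (2*m+2) = a₂ + 1 := by
    rcases mul_eq_zero.mp hfac with h' | h'
    · linarith
    · linarith
  nlinarith [h23, e, hu, hx]

/-- If `ω m` is, for each `m ≥ 1`, the minimum of the smallest roots greater than 1 of the
three polynomials `P¹_m, P²_m, P³_m`, then `(ω_m)_{m ≥ 1}` is strictly decreasing and
converges to 1. -/
theorem omega_strictAnti_tendsto_one (ω : ℕ → ℝ)
    (h : ∀ m : ℕ, 1 ≤ m → ∃ ω₁ ω₂ ω₃ : ℝ,
      IsSmallestRootGT1
        (fun y => y ^ (4 * m + 3) - y ^ (2 * m + 2) - y ^ (m + 2) - y ^ (m + 1) + y + 1) ω₁ ∧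
      IsSmallestRootGT1 (fun y => y ^ (2 * m + 3) - y ^ (2 * m + 2) - y ^ 2 + 1) ω₂ ∧
      IsSmallestRootGT1 (fun y => y ^ (2 * m + 3) - y - 1) ω₃ ∧
      ω m = min ω₁ (min ω₂ ω₃)) :
    (∀ m n : ℕ, 1 ≤ m → m < n → ω n < ω m) ∧
      Filter.Tendsto ω Filter.atTop (nhds 1) := by
  have cont1 : ∀ n : ℕ, Continuous fun y : ℝ =>
      y ^ (4*n+3) - y ^ (2*n+2) - y ^ (n+2) - y ^ (n+1) + y + 1 := fun n => by fun_prop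
  have cont3 : ∀ m : ℕ, Continuous fun y : ℝ => y ^ (2*m+3) - y - 1 := fun m => by fun_prop
  have neg1 : ∀ n : ℕ, ∀ c, 1 < c → ∃ t, 1 < t ∧ t < c ∧
      (fun y : ℝ => y ^ (4*n+3) - y ^ (2*n+2) - y ^ (n+2) - y ^ (n+1) + y + 1) t < 0 :=
    fun n => exists_neg_of_deriv
      (by show (1:ℝ) ^ (4*n+3) - 1 ^ (2*n+2) - 1 ^ (n+2) - 1 ^ (n+1) + 1 + 1 = 0; norm_num)
      (deriv1 n) (by norm_num)
  have neg3 : ∀ m : ℕ, ∀ c, 1 < c → ∃ t, 1 < t ∧ t < c ∧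
      (fun y : ℝ => y ^ (2*m+3) - y - 1) t < 0 :=
    fun m => exists_neg_of_neg_at_one (cont3 m)
      (by show (1:ℝ) ^ (2*m+3) - 1 - 1 < 0; norm_num)
  constructor
  · intro m n hm hmn
    obtain ⟨a₁, a₂, a₃, ha₁, ha₂, ha₃, ham⟩ := h m hm
    obtain ⟨b₁, b₂, b₃, hb₁, hb₂, hb₃, hbn⟩ := h n (by omega)
    have hroot1m : a₁ ^ (4*m+3) - a₁ ^ (2*m+2) - a₁ ^ (m+2) - a₁ ^ (m+1) + a₁ + 1 = 0 := ha₁.2.1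
    have hroot3m : a₃ ^ (2*m+3) - a₃ - 1 = 0 := ha₃.2.1
    have hb1a1 : b₁ < a₁ := by
      obtain ⟨t, ht1, hta, hPt⟩ := neg1 n a₁ ha₁.1
      exact ivt_root_lt (cont1 n) hb₁ ht1 hta hPt (C2 ha₁.1 hmn hroot1m)
    have hb1a3 : b₁ < a₃ := by
      obtain ⟨t, ht1, hta, hPt⟩ := neg1 n a₃ ha₃.1
      exact ivt_root_lt (cont1 n) hb₁ ht1 hta hPt (C1 ha₃.1 hmn hroot3m)
    have h32 : a₃ < a₂ := key32 m ha₂ ha₃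
    rw [ham, hbn]
    calc min b₁ (min b₂ b₃) ≤ b₁ := min_le_left _ _
      _ < min a₁ (min a₂ a₃) := lt_min hb1a1 (lt_min (hb1a3.trans h32) hb1a3)
  · rw [tendsto_order]
    constructor
    · intro a ha
      filter_upwards [eventually_ge_atTop 1] with m hm
      obtain ⟨a₁, a₂, a₃, h1, h2, h3, heq⟩ := h m hm
      rw [heq]
      exact lt_trans ha (lt_min h1.1 (lt_min h2.1 h3.1))
    · intro b hb
      have hpow : Tendsto (fun m : ℕ => b ^ m) atTop atTop :=
        tendsto_pow_atTop_atTop_of_one_lt hb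
      filter_upwards [eventually_ge_atTop 1, hpow.eventually_ge_atTop (b+1)] with m hm hbm
      obtain ⟨a₁, a₂, a₃, h1, h2, h3, heq⟩ := h m hm
      have hPb : 0 < b ^ (2*m+3) - b - 1 := by
        have : b ^ m < b ^ (2*m+3) := pow_lt_pow_right₀ hb (by omega)
        linarith
      obtain ⟨t, ht1, htb, hPt⟩ := neg3 m b hb
      have h3b : a₃ < b := ivt_root_lt (cont3 m) h3 ht1 htb hPt hPb
      rw [heq]
      calc min a₁ (min a₂ a₃) ≤ a₃ := le_trans (min_le_right _ _) (min_le_right _ _)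
        _ < b := h3b
end

section
/- The sequence (λ_m)_{m≥1} is strictly increasing and converges to (1+√5)/2. -/
open Filter

/-- For each `m ≥ 1` and each `t > 1` there is a point in `(1,t)` where the polynomial
`x^{m+3} - x^{m+2} - x^{m+1} + 1` is negative. -/
private lemma exists_neg_pt (m : ℕ) (hm : 1 ≤ m) {t : ℝ} (ht : 1 < t) :
    ∃ x : ℝ, 1 < x ∧ x < t ∧ x ^ (m + 3) - x ^ (m + 2) - x ^ (m + 1) + 1 < 0 := by
  set ε : ℝ := min ((t - 1) / 2) (1 / 8) with hεdef
  have hε0 : 0 < ε := lt_min (by linarith) (by norm_num)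
  have hε8 : ε ≤ 1 / 8 := min_le_right _ _
  have hεt : ε < t - 1 := (min_le_left _ _).trans_lt (by linarith)
  refine ⟨1 + ε, by linarith, by linarith, ?_⟩
  have hm' : (1 : ℝ) ≤ (m : ℝ) := by exact_mod_cast hm
  have hB : 1 + ((m : ℝ) + 1) * ε ≤ (1 + ε) ^ (m + 1) := by
    have := one_add_mul_le_pow (a := ε) (by linarith) (m + 1)
    push_cast at this
    linarith
  have hneg : (1 + ε) ^ 2 - (1 + ε) - 1 < 0 := by nlinarith
  have h1 : (1 + ε) ^ (m + 1) * ((1 + ε) ^ 2 - (1 + ε) - 1)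
      ≤ (1 + ((m : ℝ) + 1) * ε) * ((1 + ε) ^ 2 - (1 + ε) - 1) :=
    mul_le_mul_of_nonpos_right hB hneg.le
  have e2 : ε ^ 2 ≤ ε / 8 := by nlinarith
  have e3 : ε ^ 3 ≤ ε / 64 := by nlinarith [mul_le_mul_of_nonneg_left e2 hε0.le]
  have h2 : (1 + ((m : ℝ) + 1) * ε) * ((1 + ε) ^ 2 - (1 + ε) - 1) + 1 < 0 := by
    nlinarith [mul_le_mul_of_nonneg_left e2 (by linarith : (0:ℝ) ≤ (m : ℝ) + 2),
      mul_le_mul_of_nonneg_left e3 (by linarith : (0:ℝ) ≤ (m : ℝ) + 1),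
      mul_nonneg (by linarith : (0:ℝ) ≤ (m : ℝ) - 1) hε0.le, hε0]
  have hring : (1 + ε) ^ (m + 3) - (1 + ε) ^ (m + 2) - (1 + ε) ^ (m + 1) + 1
      = (1 + ε) ^ (m + 1) * ((1 + ε) ^ 2 - (1 + ε) - 1) + 1 := by ring
  rw [hring]
  linarith

/-- If `lam m` is, for each `m ≥ 1`, the smallest real root greater than 1 of
`x^{m+3} - x^{m+2} - x^{m+1} + 1`, then `(λ_m)_{m ≥ 1}` is strictly increasing and
converges to the golden ratio `(1+√5)/2`. -/
theorem lambda_strictMono_tendsto_golden (lam : ℕ → ℝ)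
    (h : ∀ m : ℕ, 1 ≤ m →
      IsSmallestRootGT1 (fun y => y ^ (m + 3) - y ^ (m + 2) - y ^ (m + 1) + 1) (lam m)) :
    (∀ m n : ℕ, 1 ≤ m → m < n → lam m < lam n) ∧
      Filter.Tendsto lam Filter.atTop (nhds ((1 + Real.sqrt 5) / 2)) := by
  set φ : ℝ := (1 + Real.sqrt 5) / 2 with hφdef
  have h5 : Real.sqrt 5 ^ 2 = 5 := Real.sq_sqrt (by norm_num)
  have hs1 : (1 : ℝ) < Real.sqrt 5 := by nlinarith [Real.sqrt_nonneg 5]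
  have hφ1 : 1 < φ := by rw [hφdef]; linarith
  have hφroot : φ ^ 2 - φ - 1 = 0 := by rw [hφdef]; linear_combination h5 / 4
  -- the key algebraic identity satisfied by each root
  have key : ∀ m : ℕ, 1 ≤ m → lam m ^ (m + 1) * (lam m ^ 2 - lam m - 1) = -1 := by
    intro m hm
    have h2 : lam m ^ (m + 3) - lam m ^ (m + 2) - lam m ^ (m + 1) + 1 = 0 := (h m hm).2.1
    linear_combination h2
  -- the polynomial takes value 1 at φ
  have hφval : ∀ m : ℕ, φ ^ (m + 3) - φ ^ (m + 2) - φ ^ (m + 1) + 1 = 1 := by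
    intro m
    have hr : φ ^ (m + 3) - φ ^ (m + 2) - φ ^ (m + 1) + 1
        = φ ^ (m + 1) * (φ ^ 2 - φ - 1) + 1 := by ring
    rw [hr, hφroot]; ring
  -- each λ_m is at most φ
  have hub : ∀ m : ℕ, 1 ≤ m → lam m ≤ φ := by
    intro m hm
    obtain ⟨x0, hx01, hx0t, hx0neg⟩ := exists_neg_pt m hm hφ1
    have hcont : ContinuousOn
        (fun y : ℝ => y ^ (m + 3) - y ^ (m + 2) - y ^ (m + 1) + 1) (Set.Icc x0 φ) := by
      fun_prop
    have h0mem : (0 : ℝ) ∈ Set.Icc (x0 ^ (m + 3) - x0 ^ (m + 2) - x0 ^ (m + 1) + 1)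
        (φ ^ (m + 3) - φ ^ (m + 2) - φ ^ (m + 1) + 1) := by
      refine ⟨hx0neg.le, ?_⟩
      rw [hφval m]; norm_num
    obtain ⟨y, hy, hfy⟩ := intermediate_value_Icc hx0t.le hcont h0mem
    exact ((h m hm).2.2 y (hx01.trans_le hy.1) hfy).trans hy.2
  -- strict monotonicity
  have hmono : ∀ m n : ℕ, 1 ≤ m → m < n → lam m < lam n := by
    intro m n hm hmn
    have hn : 1 ≤ n := hm.trans hmn.le
    obtain ⟨h1m, h2m, h3m⟩ := h m hm
    have h1n : 1 < lam n := (h n hn).1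
    have keyn := key n hn
    have hA : (0 : ℝ) < lam n ^ (n + 1) := pow_pos (by linarith) _
    have hpow : lam n ^ (m + 1) < lam n ^ (n + 1) := by
      exact pow_lt_pow_right₀ h1n (by omega)
    have hmul : (lam n ^ (m + 3) - lam n ^ (m + 2) - lam n ^ (m + 1) + 1) * lam n ^ (n + 1)
        = lam n ^ (n + 1) - lam n ^ (m + 1) := by
      linear_combination lam n ^ (m + 1) * keyn
    have hprod : 0 < (lam n ^ (m + 3) - lam n ^ (m + 2) - lam n ^ (m + 1) + 1)
        * lam n ^ (n + 1) := by rw [hmul]; linarith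
    have hfpos : 0 < lam n ^ (m + 3) - lam n ^ (m + 2) - lam n ^ (m + 1) + 1 := by
      by_contra hc
      push_neg at hc
      nlinarith [mul_nonpos_of_nonpos_of_nonneg hc hA.le]
    by_contra hle
    push_neg at hle
    obtain ⟨x0, hx01, hx0lt, hx0neg⟩ := exists_neg_pt m hm h1n
    have hcont : ContinuousOn
        (fun y : ℝ => y ^ (m + 3) - y ^ (m + 2) - y ^ (m + 1) + 1) (Set.Icc x0 (lam n)) := by
      fun_prop
    obtain ⟨y, hy, hfy⟩ := intermediate_value_Icc hx0lt.le hcont ⟨hx0neg.le, hfpos.le⟩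
    have hfy' : y ^ (m + 3) - y ^ (m + 2) - y ^ (m + 1) + 1 = 0 := hfy
    have hmy := h3m y (hx01.trans_le hy.1) hfy
    rcases eq_or_lt_of_le hy.2 with he | hlt
    · rw [he] at hfy'
      linarith
    · linarith
  refine ⟨hmono, ?_⟩
  -- shifted sequence
  set g : ℕ → ℝ := fun k => lam (k + 1) with hgdef
  have hgmono : Monotone g :=
    monotone_nat_of_le_succ fun k => (hmono (k + 1) (k + 2) (by omega) (by omega)).le
  have hgbdd : BddAbove (Set.range g) := by
    refine ⟨φ, ?_⟩
    rintro _ ⟨k, rfl⟩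
    exact hub (k + 1) (by omega)
  have hgtend : Tendsto g atTop (nhds (⨆ k, g k)) := tendsto_atTop_ciSup hgmono hgbdd
  set L : ℝ := ⨆ k, g k with hLdef
  have h11 : 1 < lam 1 := (h 1 le_rfl).1
  have hglb : ∀ k, lam 1 ≤ g k := fun k => by
    have := hgmono (Nat.zero_le k)
    simpa [hgdef] using this
  have hgL : ∀ k, g k ≤ L := fun k => le_ciSup hgbdd k
  have hL1 : 1 < L := h11.trans_le (hgL 0)
  -- limit of the quadratic expression
  have hq1 : Tendsto (fun k => g k ^ 2 - g k - 1) atTop (nhds (L ^ 2 - L - 1)) := by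
    have := ((hgtend.pow 2).sub hgtend).sub (tendsto_const_nhds (x := (1 : ℝ)))
    simpa using this
  have hq0 : Tendsto (fun k => g k ^ 2 - g k - 1) atTop (nhds 0) := by
    have hr0 : (0 : ℝ) ≤ (lam 1)⁻¹ := by positivity
    have hr1 : (lam 1)⁻¹ < 1 := inv_lt_one_of_one_lt₀ h11
    apply squeeze_zero_norm (a := fun k => (lam 1)⁻¹ ^ (k + 2))
    · intro k
      have hk1 : 1 ≤ k + 1 := by omega
      have hgk1 : 1 < g k := (h (k + 1) hk1).1
      have hkey : g k ^ (k + 2) * (g k ^ 2 - g k - 1) = -1 := key (k + 1) hk1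
      have hpowpos : 0 < g k ^ (k + 2) := pow_pos (by linarith) _
      have habs : g k ^ 2 - g k - 1 = -(g k ^ (k + 2))⁻¹ := by
        field_simp
        linarith [hkey]
      have hmono2 : lam 1 ^ (k + 2) ≤ g k ^ (k + 2) :=
        pow_le_pow_left₀ (by linarith) (hglb k) _
      have hinv : (g k ^ (k + 2))⁻¹ ≤ (lam 1)⁻¹ ^ (k + 2) := by
        rw [inv_pow]
        exact inv_anti₀ (pow_pos (by linarith) _) hmono2
      rw [habs, norm_neg, Real.norm_eq_abs, abs_of_pos (inv_pos.mpr hpowpos)]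
      exact hinv
    · exact (tendsto_pow_atTop_nhds_zero_of_lt_one hr0 hr1).comp (tendsto_add_atTop_nat 2)
  have hLroot : L ^ 2 - L - 1 = 0 := tendsto_nhds_unique hq1 hq0
  have hLφ : L = φ := by
    have hfac : (L - φ) * (L + φ - 1) = 0 := by linear_combination hLroot - hφroot
    rcases mul_eq_zero.mp hfac with h' | h'
    · linarith
    · linarith
  have hfin : Tendsto (fun k => lam (k + 1)) atTop (nhds φ) := by
    rw [← hLφ]
    exact hgtend
  exact (tendsto_add_atTop_iff_nat 1).mp hfin
end

section
/- For every ε > 0 there exists δ > 0 such that for every real β with 2 - δ < β < 2 and every x ∈ (0, 1/(β-1)), limsup_{k→∞} (log₂ N_k(x,β))/k ≤ ε; that is, sup_{x ∈ (0,1/(β-1))} limsup_{k→∞} (log₂ N_k(x,β))/k → 0 as β → 2⁻. -/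
/-- `E_k(x,β)`: the set of words of length `k` extendable to a β-expansion of `x`. -/
def prefixSet (β x : ℝ) (k : ℕ) : Set (Fin k → Bool) :=
  {w | ∃ ε ∈ betaExpansions β x, ∀ i : Fin k, ε i = w i}

/-- `N_k(x,β)`: the number of `k`-prefixes of β-expansions of `x`. -/
noncomputable def Nk (β x : ℝ) (k : ℕ) : ℕ := (prefixSet β x k).ncard

noncomputable def dgt (b : Bool) : ℝ := if b then 1 else 0

lemma dgt_nonneg (b : Bool) : 0 ≤ dgt b := by unfold dgt; split <;> norm_num
lemma dgt_le_one (b : Bool) : dgt b ≤ 1 := by unfold dgt; split <;> norm_num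

noncomputable def tl (β : ℝ) (ε : ℕ → Bool) (n : ℕ) : ℝ :=
  ∑' i : ℕ, dgt (ε (n + i)) / β ^ (i + 1)

section tail
variable {β : ℝ}

lemma geo_summable (hβ : 1 < β) : Summable (fun i : ℕ => β⁻¹ * β⁻¹ ^ i) := by
  exact (summable_geometric_of_lt_one (by positivity)
    (inv_lt_one_of_one_lt₀ hβ)).mul_left β⁻¹

lemma term_le (hβ : 1 < β) (ε : ℕ → Bool) (n i : ℕ) :
    dgt (ε (n + i)) / β ^ (i + 1) ≤ β⁻¹ * β⁻¹ ^ i := by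
  have hb0 : (0:ℝ) < β := lt_trans one_pos hβ
  have : β⁻¹ * β⁻¹ ^ i = 1 / β ^ (i+1) := by
    rw [one_div, pow_succ, mul_inv, inv_pow]; ring
  rw [this]
  exact div_le_div_of_nonneg_right (dgt_le_one _) (by positivity) |>.trans_eq rfl

lemma summable_tl (hβ : 1 < β) (ε : ℕ → Bool) (n : ℕ) :
    Summable (fun i : ℕ => dgt (ε (n + i)) / β ^ (i + 1)) := by
  have hb0 : (0:ℝ) < β := lt_trans one_pos hβ
  exact Summable.of_nonneg_of_le (fun i => div_nonneg (dgt_nonneg _) (by positivity)) (term_le hβ ε n) (geo_summable hβ)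

lemma tl_nonneg (hβ : 1 < β) (ε : ℕ → Bool) (n : ℕ) : 0 ≤ tl β ε n :=
  tsum_nonneg (fun i => div_nonneg (dgt_nonneg _) (pow_nonneg (le_of_lt (lt_trans one_pos hβ)) _))

lemma tl_le (hβ : 1 < β) (ε : ℕ → Bool) (n : ℕ) : tl β ε n ≤ 1 / (β - 1) := by
  have hb0 : (0:ℝ) < β := lt_trans one_pos hβ
  have h1 : tl β ε n ≤ ∑' i : ℕ, β⁻¹ * β⁻¹ ^ i :=
    Summable.tsum_le_tsum (term_le hβ ε n) (summable_tl hβ ε n) (geo_summable hβ)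
  have h2 : ∑' i : ℕ, β⁻¹ * β⁻¹ ^ i = 1/(β-1) := by
    rw [tsum_mul_left, tsum_geometric_of_lt_one (by positivity) (inv_lt_one_of_one_lt₀ hβ)]
    have hβ1 : β - 1 ≠ 0 := by intro h; nlinarith
    field_simp
  linarith
end tail

section t2
variable {β : ℝ}

lemma tl_succ (hβ : 1 < β) (ε : ℕ → Bool) (n : ℕ) :
    tl β ε (n + 1) = β * tl β ε n - dgt (ε n) := by
  have hb0 : (0:ℝ) < β := lt_trans one_pos hβ
  have h : tl β ε n = dgt (ε n) / β + β⁻¹ * tl β ε (n + 1) := by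
    rw [tl, Summable.tsum_eq_zero_add (summable_tl hβ ε n)]
    congr 1
    · norm_num
    · rw [tl, ← tsum_mul_left]
      apply tsum_congr
      intro i
      rw [show n + (i + 1) = (n + 1) + i from by omega, pow_succ, inv_mul_eq_div, div_div]
  have hne : β ≠ 0 := ne_of_gt hb0
  field_simp at h
  linarith
end t2

section t3
variable {β : ℝ}

lemma tl_congr (hβ : 1 < β) {ε ε' : ℕ → Bool} (h0 : tl β ε 0 = tl β ε' 0)
    (n : ℕ) (h : ∀ i < n, ε i = ε' i) : tl β ε n = tl β ε' n := by
  induction n with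
  | zero => exact h0
  | succ n ih =>
    rw [tl_succ hβ, tl_succ hβ, ih (fun i hi => h i (by omega)), h n (by omega)]

lemma forced_false (hβ : 1 < β) {ε : ℕ → Bool} {n : ℕ} (h : β * tl β ε n < 1) :
    ε n = false := by
  by_contra hc
  have : ε n = true := by revert hc; cases ε n <;> simp
  have h1 := tl_succ hβ ε n
  rw [this] at h1
  have : dgt true = 1 := by unfold dgt; norm_num
  have := tl_nonneg hβ ε (n + 1)
  nlinarith [h1, this]

lemma forced_true (hβ : 1 < β) {ε : ℕ → Bool} {n : ℕ}
    (h : 1 / (β - 1) < β * tl β ε n) : ε n = true := by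
  by_contra hc
  have hf : ε n = false := by revert hc; cases ε n <;> simp
  have h1 := tl_succ hβ ε n
  rw [hf] at h1
  have hd : dgt false = 0 := by unfold dgt; norm_num
  rw [hd] at h1
  have := tl_le hβ ε (n + 1)
  linarith

/-- small run: digits forced to 0 while the tail stays small. -/
lemma small_run (hβ : 1 < β) {ε : ℕ → Bool} {n M : ℕ}
    (h : β ^ M * tl β ε n < 1) :
    ∀ i ≤ M, tl β ε (n + i) = β ^ i * tl β ε n := by
  have hb0 : (0:ℝ) < β := lt_trans one_pos hβ
  have ht0 : 0 ≤ tl β ε n := tl_nonneg hβ ε n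
  intro i hi
  induction i with
  | zero => simp
  | succ i ih =>
    have ihv := ih (by omega)
    have hpow : β ^ (i + 1) ≤ β ^ M := pow_le_pow_right₀ hβ.le (by omega)
    have hlt : β * tl β ε (n + i) < 1 := by
      rw [ihv, ← mul_assoc, mul_comm β (β ^ i), ← pow_succ]
      calc β ^ (i+1) * tl β ε n ≤ β ^ M * tl β ε n := by
            exact mul_le_mul_of_nonneg_right hpow ht0
        _ < 1 := h
    have hf : ε (n + i) = false := forced_false hβ hlt
    rw [show n + (i+1) = (n+i) + 1 from by omega, tl_succ hβ, hf, ihv]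
    unfold dgt; simp; ring

lemma small_run_digit (hβ : 1 < β) {ε : ℕ → Bool} {n M : ℕ}
    (h : β ^ M * tl β ε n < 1) : ∀ i < M, ε (n + i) = false := by
  intro i hi
  have hb0 : (0:ℝ) < β := lt_trans one_pos hβ
  have ht0 : 0 ≤ tl β ε n := tl_nonneg hβ ε n
  have ihv := small_run hβ h i (by omega)
  have hpow : β ^ (i + 1) ≤ β ^ M := pow_le_pow_right₀ hβ.le (by omega)
  apply forced_false hβ
  rw [ihv, ← mul_assoc, mul_comm β (β ^ i), ← pow_succ]
  calc β ^ (i+1) * tl β ε n ≤ β ^ M * tl β ε n := mul_le_mul_of_nonneg_right hpow ht0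
    _ < 1 := h

/-- large run: digits forced to 1 while the gap from the top stays small. -/
lemma large_run (hβ : 1 < β) {ε : ℕ → Bool} {n M : ℕ}
    (h : β ^ M * (1 / (β - 1) - tl β ε n) < 1) :
    ∀ i ≤ M, 1 / (β - 1) - tl β ε (n + i) = β ^ i * (1 / (β - 1) - tl β ε n) := by
  have hb0 : (0:ℝ) < β := lt_trans one_pos hβ
  have hs0 : 0 ≤ 1 / (β - 1) - tl β ε n := by linarith [tl_le hβ ε n]
  intro i hi
  induction i with
  | zero => simp
  | succ i ih =>
    have ihv := ih (by omega)
    have hpow : β ^ (i + 1) ≤ β ^ M := pow_le_pow_right₀ hβ.le (by omega)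
    have hlt : β * (1 / (β - 1) - tl β ε (n + i)) < 1 := by
      rw [ihv, ← mul_assoc, mul_comm β (β ^ i), ← pow_succ]
      calc β ^ (i+1) * (1/(β-1) - tl β ε n) ≤ β ^ M * (1/(β-1) - tl β ε n) :=
            mul_le_mul_of_nonneg_right hpow hs0
        _ < 1 := h
    have hb1 : (0:ℝ) < β - 1 := by linarith
    have hkey : β * (1 / (β - 1)) = 1 / (β - 1) + 1 := by field_simp; ring
    have hexp : β * (1 / (β - 1) - tl β ε (n + i))
        = β * (1 / (β - 1)) - β * tl β ε (n + i) := by ring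
    have hf : ε (n + i) = true := by
      apply forced_true hβ
      linarith
    rw [show n + (i+1) = (n+i) + 1 from by omega, tl_succ hβ, hf,
      show dgt true = 1 from by unfold dgt; norm_num]
    linear_combination β * ihv - hkey

lemma large_run_digit (hβ : 1 < β) {ε : ℕ → Bool} {n M : ℕ}
    (h : β ^ M * (1 / (β - 1) - tl β ε n) < 1) : ∀ i < M, ε (n + i) = true := by
  intro i hi
  have hb0 : (0:ℝ) < β := lt_trans one_pos hβ
  have hs0 : 0 ≤ 1 / (β - 1) - tl β ε n := by linarith [tl_le hβ ε n]
  have ihv := large_run hβ h i (by omega)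
  have hpow : β ^ (i + 1) ≤ β ^ M := pow_le_pow_right₀ hβ.le (by omega)
  have hlt : β * (1 / (β - 1) - tl β ε (n + i)) < 1 := by
    rw [ihv, ← mul_assoc, mul_comm β (β ^ i), ← pow_succ]
    calc β ^ (i+1) * (1/(β-1) - tl β ε n) ≤ β ^ M * (1/(β-1) - tl β ε n) :=
          mul_le_mul_of_nonneg_right hpow hs0
      _ < 1 := h
  have hb1 : (0:ℝ) < β - 1 := by linarith
  have hkey : β * (1 / (β - 1)) = 1 / (β - 1) + 1 := by field_simp; ring
  have hexp : β * (1 / (β - 1) - tl β ε (n + i))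
      = β * (1 / (β - 1)) - β * tl β ε (n + i) := by ring
  apply forced_true hβ
  linarith
end t3

section t4
variable {β x : ℝ}

lemma tl_zero_of_mem (hε : ε ∈ betaExpansions β x) : tl β ε 0 = x := by
  rw [tl]
  rw [show (fun i : ℕ => dgt (ε (0 + i)) / β ^ (i + 1))
      = fun n : ℕ => (if ε n then (1:ℝ) else 0) / β ^ (n + 1) from by
    funext i; rw [zero_add]; rfl]
  exact hε

lemma pair_kill (hβ : 1 < β) {a b η : ℕ → Bool} {m j : ℕ}
    (hc : β ^ (m - 1) * ((2 - β) / (β - 1)) < 1)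
    (ha : tl β a 0 = x) (hb : tl β b 0 = x) (hη : tl β η 0 = x)
    (hab : ∀ i < j, a i = b i) (haη : ∀ i < j, a i = η i)
    (hj : a j = b j) (hne : η j ≠ a j) :
    ∀ i < m, a (j + i) = b (j + i) := by
  have hb0 : (0:ℝ) < β := lt_trans one_pos hβ
  have hb1 : (0:ℝ) < β - 1 := by linarith
  have htab : tl β a j = tl β b j := tl_congr hβ (by rw [ha, hb]) j hab
  have htaη : tl β a j = tl β η j := tl_congr hβ (by rw [ha, hη]) j haη
  have hkey : β * (1 / (β - 1)) = 1 / (β - 1) + 1 := by field_simp; ring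
  have hcnn : (1:ℝ) / (β - 1) - 1 = (2 - β) / (β - 1) := by field_simp; ring
  have hpow : (0:ℝ) ≤ β ^ (m - 1) := by positivity
  intro i hi
  rcases Nat.eq_zero_or_pos i with rfl | hipos
  · simpa using hj
  obtain ⟨i', rfl⟩ : ∃ i', i = i' + 1 := ⟨i - 1, by omega⟩
  have hi' : i' < m - 1 := by omega
  have hsa := tl_succ hβ a j
  have hsb := tl_succ hβ b j
  have hsη := tl_succ hβ η j
  cases haj : a j with
  | true =>
    have hbj : b j = true := hj ▸ haj
    have hηj : η j = false := by revert hne; rw [haj]; cases η j <;> simp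
    rw [haj, show dgt true = 1 from by unfold dgt; norm_num] at hsa
    rw [hbj, show dgt true = 1 from by unfold dgt; norm_num] at hsb
    rw [hηj, show dgt false = 0 from by unfold dgt; norm_num] at hsη
    have hηle := tl_le hβ η (j + 1)
    rw [← htab] at hsb
    rw [← htaη] at hsη
    have hta : tl β a (j + 1) ≤ (2 - β) / (β - 1) := by linarith
    have htb : tl β b (j + 1) ≤ (2 - β) / (β - 1) := by linarith
    have h1 : β ^ (m - 1) * tl β a (j + 1) < 1 :=
      lt_of_le_of_lt (mul_le_mul_of_nonneg_left hta hpow) hc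
    have h2 : β ^ (m - 1) * tl β b (j + 1) < 1 :=
      lt_of_le_of_lt (mul_le_mul_of_nonneg_left htb hpow) hc
    rw [show j + (i' + 1) = (j + 1) + i' from by omega]
    rw [small_run_digit hβ h1 i' hi', small_run_digit hβ h2 i' hi']
  | false =>
    have hbj : b j = false := hj ▸ haj
    have hηj : η j = true := by revert hne; rw [haj]; cases η j <;> simp
    rw [haj, show dgt false = 0 from by unfold dgt; norm_num] at hsa
    rw [hbj, show dgt false = 0 from by unfold dgt; norm_num] at hsb
    rw [hηj, show dgt true = 1 from by unfold dgt; norm_num] at hsη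
    have hηge := tl_nonneg hβ η (j + 1)
    rw [← htab] at hsb
    rw [← htaη] at hsη
    have hta : 1 / (β - 1) - tl β a (j + 1) ≤ (2 - β) / (β - 1) := by linarith
    have htb : 1 / (β - 1) - tl β b (j + 1) ≤ (2 - β) / (β - 1) := by linarith
    have h1 : β ^ (m - 1) * (1 / (β - 1) - tl β a (j + 1)) < 1 :=
      lt_of_le_of_lt (mul_le_mul_of_nonneg_left hta hpow) hc
    have h2 : β ^ (m - 1) * (1 / (β - 1) - tl β b (j + 1)) < 1 :=
      lt_of_le_of_lt (mul_le_mul_of_nonneg_left htb hpow) hc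
    rw [show j + (i' + 1) = (j + 1) + i' from by omega]
    rw [large_run_digit hβ h1 i' hi', large_run_digit hβ h2 i' hi']
end t4

section t5
variable {β x : ℝ}

def res {k m : ℕ} (w : Fin (k + m) → Bool) : Fin k → Bool :=
  fun i => w ⟨i.1, by omega⟩

lemma words_eq (hβ : 1 < β) {m k j : ℕ}
    (hc : β ^ (m - 1) * ((2 - β) / (β - 1)) < 1)
    {a b : Fin (k + m) → Bool} {εa εb εη : ℕ → Bool}
    (hta : tl β εa 0 = x) (htb : tl β εb 0 = x) (htη : tl β εη 0 = x)
    (hwa : ∀ i : Fin (k + m), εa i = a i) (hwb : ∀ i : Fin (k + m), εb i = b i)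
    (hjk : k ≤ j)
    (hagree : ∀ i < j, εa i = εb i) (hagη : ∀ i < j, εa i = εη i)
    (hjeq : εa j = εb j) (hjne : εη j ≠ εa j) : a = b := by
  have key := pair_kill (x := x) hβ hc hta htb htη hagree hagη hjeq hjne
  funext i
  rw [← hwa i, ← hwb i]
  rcases lt_or_ge (i : ℕ) j with h | h
  · exact hagree i h
  · rw [show ((i : ℕ)) = j + ((i : ℕ) - j) from by omega]
    exact key _ (by have := i.2; omega)

lemma no_three (hβ : 1 < β) {m k : ℕ} (hm : 1 ≤ m)
    (hc : β ^ (m - 1) * ((2 - β) / (β - 1)) < 1)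
    {u v w : Fin (k + m) → Bool}
    (hu : u ∈ prefixSet β x (k + m)) (hv : v ∈ prefixSet β x (k + m))
    (hw : w ∈ prefixSet β x (k + m))
    (ruv : res u = res v) (ruw : res u = res w)
    (huv : u ≠ v) (huw : u ≠ w) (hvw : v ≠ w) : False := by
  obtain ⟨εu, hεu, hwu⟩ := hu
  obtain ⟨εv, hεv, hwv⟩ := hv
  obtain ⟨εw, hεw, hww⟩ := hw
  have htu := tl_zero_of_mem hεu
  have htv := tl_zero_of_mem hεv
  have htw := tl_zero_of_mem hεw
  classical
  have hex : ∃ j, ¬(εu j = εv j ∧ εu j = εw j) := by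
    by_contra hcon
    push_neg at hcon
    apply huv
    funext i
    rw [← hwu i, ← hwv i, (hcon i).1]
  set j := Nat.find hex with hjdef
  have hPj : ¬(εu j = εv j ∧ εu j = εw j) := Nat.find_spec hex
  have hmin : ∀ i < j, εu i = εv i ∧ εu i = εw i := by
    intro i hi
    rw [hjdef] at hi
    have := Nat.find_min hex hi
    tauto
  have hjk : k ≤ j := by
    by_contra hjk
    push_neg at hjk
    apply hPj
    have h1 : εu j = εv j := by
      rw [hwu ⟨j, by omega⟩, hwv ⟨j, by omega⟩]
      have := congrFun ruv ⟨j, hjk⟩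
      exact this
    have h2 : εu j = εw j := by
      rw [hwu ⟨j, by omega⟩, hww ⟨j, by omega⟩]
      exact congrFun ruw ⟨j, hjk⟩
    exact ⟨h1, h2⟩
  cases hp : εu j <;> cases hq : εv j <;> cases hr : εw j
  · exact hPj (by rw [hp, hq, hr]; exact ⟨rfl, rfl⟩)
  · -- u=v=false, w=true : pair (u,v), η = εw
    exact huv (words_eq hβ hc htu htv htw hwu hwv hjk
      (fun i hi => (hmin i hi).1) (fun i hi => (hmin i hi).2)
      (by rw [hp, hq]) (by rw [hr, hp]; simp))
  · -- u=w
    exact huw (words_eq hβ hc htu htw htv hwu hww hjk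
      (fun i hi => (hmin i hi).2) (fun i hi => (hmin i hi).1)
      (by rw [hp, hr]) (by rw [hq, hp]; simp))
  · -- v=w=true? u=false v=true w=true: pair (v,w), η = εu
    exact hvw (words_eq hβ hc htv htw htu hwv hww hjk
      (fun i hi => (hmin i hi).1.symm.trans (hmin i hi).2)
      (fun i hi => (hmin i hi).1.symm)
      (by rw [hq, hr]) (by rw [hp, hq]; simp))
  · -- u=true v=false w=false: pair (v,w), η = εu
    exact hvw (words_eq hβ hc htv htw htu hwv hww hjk
      (fun i hi => (hmin i hi).1.symm.trans (hmin i hi).2)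
      (fun i hi => (hmin i hi).1.symm)
      (by rw [hq, hr]) (by rw [hp, hq]; simp))
  · -- u=true v=false w=true: pair (u,w)
    exact huw (words_eq hβ hc htu htw htv hwu hww hjk
      (fun i hi => (hmin i hi).2) (fun i hi => (hmin i hi).1)
      (by rw [hp, hr]) (by rw [hq, hp]; simp))
  · -- u=true v=true w=false: pair (u,v)
    exact huv (words_eq hβ hc htu htv htw hwu hwv hjk
      (fun i hi => (hmin i hi).1) (fun i hi => (hmin i hi).2)
      (by rw [hp, hq]) (by rw [hr, hp]; simp))
  · exact hPj (by rw [hp, hq, hr]; exact ⟨rfl, rfl⟩)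

lemma card_step (hβ : 1 < β) {m : ℕ} (hm : 1 ≤ m)
    (hc : β ^ (m - 1) * ((2 - β) / (β - 1)) < 1) (k : ℕ) :
    Nk β x (k + m) ≤ 2 * Nk β x k := by
  classical
  have hS : (prefixSet β x (k + m)).Finite := Set.toFinite _
  have hT : (prefixSet β x k).Finite := Set.toFinite _
  rw [Nk, Nk, Set.ncard_eq_toFinset_card _ hS, Set.ncard_eq_toFinset_card _ hT]
  have hmap : ∀ w ∈ hS.toFinset, res w ∈ hT.toFinset := by
    intro w hw
    rw [Set.Finite.mem_toFinset] at hw ⊢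
    obtain ⟨ε, hε, hwε⟩ := hw
    exact ⟨ε, hε, fun i => hwε ⟨i.1, by omega⟩⟩
  have himg : hS.toFinset.image res ⊆ hT.toFinset := by
    intro a ha
    obtain ⟨w, hw, rfl⟩ := Finset.mem_image.mp ha
    exact hmap w hw
  calc hS.toFinset.card ≤ 2 * (hS.toFinset.image res).card := by
        apply Finset.card_le_mul_card_image
        intro a _
        by_contra hgt
        push_neg at hgt
        obtain ⟨u, v, w, hu, hv, hw, huv, huw, hvw⟩ :=
          Finset.two_lt_card_iff.mp hgt
        rw [Finset.mem_filter, Set.Finite.mem_toFinset] at hu hv hw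
        exact no_three hβ hm hc hu.1 hv.1 hw.1 (hu.2.trans hv.2.symm)
          (hu.2.trans hw.2.symm) huv huw hvw
    _ ≤ 2 * hT.toFinset.card := by
        exact Nat.mul_le_mul_left 2 (Finset.card_le_card himg)
end t5

section t6
variable {β x : ℝ}

lemma Nk_le_two_pow (r : ℕ) : Nk β x r ≤ 2 ^ r := by
  have h := Set.ncard_le_ncard (Set.subset_univ (prefixSet β x r)) (Set.finite_univ)
  rw [Set.ncard_univ] at h
  simpa [Nk, Nat.card_eq_fintype_card] using h

lemma Nk_le (hβ : 1 < β) {m : ℕ} (hm : 1 ≤ m)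
    (hc : β ^ (m - 1) * ((2 - β) / (β - 1)) < 1) (n : ℕ) :
    Nk β x n ≤ 2 ^ (n / m + m) := by
  have it : ∀ q r, Nk β x (r + q * m) ≤ 2 ^ q * Nk β x r := by
    intro q
    induction q with
    | zero => simp
    | succ q ih =>
      intro r
      calc Nk β x (r + (q + 1) * m) = Nk β x ((r + q * m) + m) := by ring_nf
        _ ≤ 2 * Nk β x (r + q * m) := card_step hβ hm hc _
        _ ≤ 2 * (2 ^ q * Nk β x r) := Nat.mul_le_mul_left _ (ih r)
        _ = 2 ^ (q + 1) * Nk β x r := by ring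
  calc Nk β x n = Nk β x (n % m + (n / m) * m) := by rw [Nat.mod_add_div']
    _ ≤ 2 ^ (n / m) * Nk β x (n % m) := it _ _
    _ ≤ 2 ^ (n / m) * 2 ^ (n % m) := Nat.mul_le_mul_left _ (Nk_le_two_pow _)
    _ ≤ 2 ^ (n / m) * 2 ^ m := by
        apply Nat.mul_le_mul_left
        exact Nat.pow_le_pow_right (by norm_num) (le_of_lt (Nat.mod_lt _ (by omega)))
    _ = 2 ^ (n / m + m) := (pow_add 2 _ _).symm

lemma logb_Nk_le (hβ : 1 < β) {m : ℕ} (hm : 1 ≤ m)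
    (hc : β ^ (m - 1) * ((2 - β) / (β - 1)) < 1) (n : ℕ) :
    Real.logb 2 (Nk β x n) ≤ (n / m + m : ℕ) := by
  rcases Nat.eq_zero_or_pos (Nk β x n) with h0 | hpos
  · rw [h0]; simp [Real.logb_zero]; positivity
  · have h1 : (1:ℝ) ≤ (Nk β x n : ℝ) := by exact_mod_cast hpos
    have h2 : (Nk β x n : ℝ) ≤ (2:ℝ) ^ (n / m + m) := by
      exact_mod_cast Nk_le hβ hm hc n
    calc Real.logb 2 (Nk β x n) ≤ Real.logb 2 ((2:ℝ) ^ (n / m + m)) :=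
          Real.logb_le_logb_of_le (by norm_num) (by linarith) h2
      _ = (n / m + m : ℕ) := by
          rw [Real.logb_pow, Real.logb_self_eq_one (by norm_num)]
          push_cast; ring
end t6

/-- As `β → 2⁻`, the supremum over `x ∈ (0, 1/(β-1))` of the upper growth rate of
`N_k(x,β)` tends to `0`. -/
theorem limsup_growth_rate_tendsto_zero :
    ∀ ε : ℝ, 0 < ε → ∃ δ : ℝ, 0 < δ ∧
      ∀ β : ℝ, 2 - δ < β → β < 2 →
        ∀ x : ℝ, x ∈ Set.Ioo 0 (1 / (β - 1)) →
          Filter.limsup (fun k : ℕ => Real.logb 2 (Nk β x k) / k) Filter.atTop ≤ ε := by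
  intro ε hε
  set m : ℕ := ⌈2 / ε⌉₊ with hmdef
  have hm1 : 1 ≤ m := Nat.ceil_pos.mpr (by positivity)
  have hmε : (2:ℝ) ≤ ε * m := by
    have h := Nat.le_ceil (2 / ε)
    calc (2:ℝ) = ε * (2 / ε) := by field_simp
      _ ≤ ε * m := mul_le_mul_of_nonneg_left h hε.le
  refine ⟨1 / 2 ^ m, by positivity, ?_⟩
  intro β hβl hβu x _
  have hδ : (0:ℝ) < 1 / 2 ^ m := by positivity
  have h2m2 : (2:ℝ) ≤ 2 ^ m := by
    calc (2:ℝ) = 2 ^ 1 := (pow_one 2).symm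
      _ ≤ 2 ^ m := pow_le_pow_right₀ (by norm_num) hm1
  have hδle : (1:ℝ) / 2 ^ m ≤ 1 / 2 := by
    apply div_le_div_of_nonneg_left (by norm_num) (by norm_num) h2m2
  have hβ : (1:ℝ) < β := by linarith
  have hb1 : (0:ℝ) < β - 1 := by linarith
  -- the key numeric bound
  have hcnn : (0:ℝ) ≤ (2 - β) / (β - 1) := div_nonneg (by linarith) hb1.le
  have hclt : (2 - β) / (β - 1) < 2 * (1 / 2 ^ m) := by
    rw [div_lt_iff₀ hb1]
    nlinarith [mul_pos hδ (show (0:ℝ) < 2 * β - 3 by linarith)]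
  have hpow : β ^ (m - 1) ≤ (2:ℝ) ^ (m - 1) := pow_le_pow_left₀ (by linarith) (by linarith) _
  have key : (2:ℝ) ^ (m - 1) * (2 * (1 / 2 ^ m)) = 1 := by
    have h2m : (2:ℝ) ^ m = 2 ^ (m - 1) * 2 := by
      rw [← pow_succ]; congr 1; omega
    rw [h2m]
    have : ((2:ℝ) ^ (m-1)) ≠ 0 := by positivity
    field_simp
  have hc : β ^ (m - 1) * ((2 - β) / (β - 1)) < 1 := by
    calc β ^ (m - 1) * ((2 - β) / (β - 1)) ≤ 2 ^ (m - 1) * ((2 - β) / (β - 1)) :=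
          mul_le_mul_of_nonneg_right hpow hcnn
      _ < 2 ^ (m - 1) * (2 * (1 / 2 ^ m)) :=
          mul_lt_mul_of_pos_left hclt (by positivity)
      _ = 1 := key
  -- coboundedness
  have hub : ∀ n : ℕ, 0 ≤ Real.logb 2 (Nk β x n) / n := by
    intro n
    apply div_nonneg _ (Nat.cast_nonneg n)
    rcases Nat.eq_zero_or_pos (Nk β x n) with h | h
    · simp [h]
    · exact Real.logb_nonneg (by norm_num) (by exact_mod_cast h)
  apply Filter.limsup_le_of_le (Filter.isCoboundedUnder_le_of_le Filter.atTop hub)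
  rw [Filter.eventually_atTop]
  refine ⟨max 1 ⌈2 * m / ε⌉₊, fun n hn => ?_⟩
  have hn1 : 1 ≤ n := le_trans (le_max_left _ _) hn
  have hn2 : ⌈2 * (m:ℝ) / ε⌉₊ ≤ n := by
    refine le_trans ?_ hn
    apply le_max_right
  have hnR : 2 * (m:ℝ) / ε ≤ n := le_trans (Nat.le_ceil _) (by exact_mod_cast hn2)
  have hεn : 2 * (m:ℝ) ≤ ε * n := by
    have h := mul_le_mul_of_nonneg_left hnR hε.le
    rwa [mul_div_cancel₀ _ (ne_of_gt hε)] at h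
  have hlog := logb_Nk_le (x := x) hβ hm1 hc n
  have hq : ((n / m : ℕ) : ℝ) * m ≤ n := by exact_mod_cast Nat.div_mul_le_self n m
  have hnpos : (0:ℝ) < n := by exact_mod_cast hn1
  rw [div_le_iff₀ hnpos]
  have hcast : ((n / m + m : ℕ) : ℝ) = ((n / m : ℕ) : ℝ) + m := by push_cast; ring
  have hqn : (0:ℝ) ≤ ((n / m : ℕ) : ℝ) := Nat.cast_nonneg _
  have hmR : (0:ℝ) < (m:ℝ) := by exact_mod_cast hm1
  calc Real.logb 2 (Nk β x n) ≤ ((n / m + m : ℕ) : ℝ) := hlog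
    _ ≤ ε * n := by
        rw [hcast]
        nlinarith [mul_le_mul_of_nonneg_left hmε hqn, mul_le_mul_of_nonneg_left hq hε.le]
end

section
/- Let m ≥ 2 be an integer and let β ∈ (2^{1/m}, 2). Then for every x ∈ (0, 1/(β-1)), limsup_{k→∞} (log₂ N_k(x,β))/k ≤ (log₂(2^m - 1))/m. -/
namespace BetaAux

/-- The digit sequence terms are summable when `β > 1`. -/
lemma summable_d {β : ℝ} (hβ1 : 1 < β) (ε : ℕ → Bool) :
    Summable fun n => (if ε n then (1 : ℝ) else 0) / β ^ (n + 1) := by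
  have hβ0 : (0 : ℝ) < β := lt_trans one_pos hβ1
  have hr0 : (0 : ℝ) ≤ 1 / β := by positivity
  have hr1 : 1 / β < 1 := by
    rw [div_lt_one hβ0]; exact hβ1
  have hg : Summable fun n : ℕ => (1 / β) ^ (n + 1) :=
    (summable_geometric_of_lt_one hr0 hr1).comp_injective (add_left_injective 1)
  refine Summable.of_nonneg_of_le (fun n => by positivity) (fun n => ?_) hg
  rw [one_div, inv_pow, ← one_div]
  split_ifs
  · exact le_rfl
  · rw [zero_div]; positivity

/-- Key exclusion: one cannot have two expansions of the same `x` agreeing on the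
first `k` digits, one with `m` zeros next and one with `m` ones next, if `β^m > 2`. -/
lemma no_both {β x : ℝ} {m : ℕ} (hβ1 : 1 < β) (hβm : 2 < β ^ m) (k : ℕ)
    (ε₀ ε₁ : ℕ → Bool) (h₀ : ε₀ ∈ betaExpansions β x) (h₁ : ε₁ ∈ betaExpansions β x)
    (hagree : ∀ i < k, ε₀ i = ε₁ i)
    (hf : ∀ j < m, ε₀ (k + j) = false) (ht : ∀ j < m, ε₁ (k + j) = true) : False := by
  have hβ0 : (0 : ℝ) < β := lt_trans one_pos hβ1
  set r : ℝ := 1 / β with hr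
  have hr0 : (0 : ℝ) < r := by positivity
  have hr1 : r < 1 := by rw [hr, div_lt_one hβ0]; exact hβ1
  set d₀ : ℕ → ℝ := fun n => (if ε₀ n then (1 : ℝ) else 0) / β ^ (n + 1) with hd₀
  set d₁ : ℕ → ℝ := fun n => (if ε₁ n then (1 : ℝ) else 0) / β ^ (n + 1) with hd₁
  have hs₀ : Summable d₀ := summable_d hβ1 ε₀
  have hs₁ : Summable d₁ := summable_d hβ1 ε₁
  have hdle : ∀ (ε : ℕ → Bool) (n : ℕ),
      (if ε n then (1 : ℝ) else 0) / β ^ (n + 1) ≤ r ^ (n + 1) := by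
    intro ε n
    rw [hr, one_div, inv_pow, ← one_div]
    split_ifs
    · exact le_rfl
    · rw [zero_div]; positivity
  have hdnn : ∀ (ε : ℕ → Bool) (n : ℕ),
      0 ≤ (if ε n then (1 : ℝ) else 0) / β ^ (n + 1) := by
    intro ε n; positivity
  -- the tails beyond position k agree
  have hhead : ∑ i ∈ Finset.range k, d₀ i = ∑ i ∈ Finset.range k, d₁ i := by
    refine Finset.sum_congr rfl fun i hi => ?_
    rw [hd₀, hd₁]; simp only []
    rw [hagree i (Finset.mem_range.mp hi)]
  have htail : ∑' n, d₀ (n + k) = ∑' n, d₁ (n + k) := by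
    have e₀ := hs₀.sum_add_tsum_nat_add (f := d₀) k
    have e₁ := hs₁.sum_add_tsum_nat_add (f := d₁) k
    rw [h₀] at e₀
    rw [h₁] at e₁
    linarith [e₀, e₁, hhead]
  -- the tail of ε₀ is at most r^(m+k+1)/(1-r)
  have hs₀' : Summable fun n => d₀ (n + k) := hs₀.comp_injective (add_left_injective k)
  have hs₀'' : Summable fun n => d₀ (n + m + k) := by
    have : Summable fun n => d₀ ((n + m) + k) :=
      hs₀'.comp_injective (add_left_injective m)
    simpa using this
  have hzero : ∀ n < m, d₀ (n + k) = 0 := by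
    intro n hn
    rw [hd₀]; simp only []
    rw [add_comm n k, hf n hn]; simp
  have ht₀ : ∑' n, d₀ (n + k) ≤ r ^ (m + k + 1) * (1 - r)⁻¹ := by
    have hsplit := hs₀'.sum_add_tsum_nat_add (f := fun n => d₀ (n + k)) m
    have hzsum : ∑ i ∈ Finset.range m, d₀ (i + k) = 0 :=
      Finset.sum_eq_zero fun i hi => hzero i (Finset.mem_range.mp hi)
    have hgsum : Summable fun n : ℕ => r ^ (n + (m + k + 1)) := by
      have := (summable_geometric_of_lt_one hr0.le hr1).mul_right (r ^ (m + k + 1))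
      exact this.congr fun n => (pow_add r n _).symm
    have hle : ∑' n, d₀ ((n + m) + k) ≤ ∑' n : ℕ, r ^ (n + (m + k + 1)) := by
      refine Summable.tsum_le_tsum (fun n => ?_) (by simpa using hs₀'') hgsum
      have := hdle ε₀ (n + m + k)
      calc d₀ ((n + m) + k) ≤ r ^ ((n + m + k) + 1) := by simpa [hd₀] using this
        _ = r ^ (n + (m + k + 1)) := by ring_nf
    have hgeq : ∑' n : ℕ, r ^ (n + (m + k + 1)) = r ^ (m + k + 1) * (1 - r)⁻¹ := by
      have : ∀ n : ℕ, r ^ (n + (m + k + 1)) = r ^ n * r ^ (m + k + 1) := fun n => pow_add r n _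
      rw [tsum_congr this, tsum_mul_right, tsum_geometric_of_lt_one hr0.le hr1]
      ring
    calc ∑' n, d₀ (n + k) = ∑' n, d₀ ((n + m) + k) := by
          rw [← hsplit, hzsum, zero_add]
      _ ≤ r ^ (m + k + 1) * (1 - r)⁻¹ := hgeq ▸ hle
  -- the tail of ε₁ is at least the sum of the m ones
  have hone : ∀ n < m, d₁ (n + k) = r ^ (n + k + 1) := by
    intro n hn
    rw [hd₁]; simp only []
    rw [add_comm n k, ht n hn]
    simp [hr, one_div, inv_pow, add_comm k n]
  have ht₁ : ∑ n ∈ Finset.range m, r ^ (n + k + 1) ≤ ∑' n, d₁ (n + k) := by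
    have hs₁' : Summable fun n => d₁ (n + k) := hs₁.comp_injective (add_left_injective k)
    have := Summable.sum_le_tsum (f := fun n => d₁ (n + k)) (Finset.range m)
      (fun i _ => hdnn ε₁ (i + k)) hs₁'
    calc ∑ n ∈ Finset.range m, r ^ (n + k + 1)
        = ∑ n ∈ Finset.range m, d₁ (n + k) :=
          (Finset.sum_congr rfl fun n hn => (hone n (Finset.mem_range.mp hn)).symm)
      _ ≤ ∑' n, d₁ (n + k) := this
  -- compute the finite sum
  have hsum : ∑ n ∈ Finset.range m, r ^ (n + k + 1)
      = (r ^ m - 1) / (r - 1) * r ^ (k + 1) := by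
    have : ∀ n ∈ Finset.range m, r ^ (n + k + 1) = r ^ n * r ^ (k + 1) := by
      intro n _; rw [← pow_add]; ring_nf
    rw [Finset.sum_congr rfl this, ← Finset.sum_mul, geom_sum_eq hr1.ne m]
  -- derive contradiction
  have hrm : r ^ m < 1 / 2 := by
    rw [hr, one_div, inv_pow, inv_lt_comm₀ (by positivity) (by norm_num)]
    simpa using hβm
  have hchain : (r ^ m - 1) / (r - 1) * r ^ (k + 1) ≤ r ^ (m + k + 1) * (1 - r)⁻¹ := by
    rw [← hsum]
    exact le_trans (le_trans ht₁ (le_of_eq htail.symm)) ht₀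
  have h1r : (0:ℝ) < 1 - r := by linarith
  have hrk : (0:ℝ) < r ^ (k + 1) := by positivity
  have key : (1 - r ^ m) * r ^ (k + 1) ≤ r ^ m * r ^ (k + 1) := by
    have e1 : (r ^ m - 1) / (r - 1) = (1 - r ^ m) / (1 - r) := by
      rw [div_eq_div_iff (by linarith) (by linarith)]; ring
    have e2 : r ^ (m + k + 1) = r ^ m * r ^ (k + 1) := by rw [← pow_add]; ring_nf
    rw [e1, e2] at hchain
    have := mul_le_mul_of_nonneg_right hchain h1r.le
    calc (1 - r ^ m) * r ^ (k + 1) = (1 - r ^ m) / (1 - r) * r ^ (k + 1) * (1 - r) := by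
          field_simp
      _ ≤ r ^ m * r ^ (k + 1) * (1 - r)⁻¹ * (1 - r) := this
      _ = r ^ m * r ^ (k + 1) := by field_simp
  nlinarith [key, hrk, hrm]

lemma Nk_add_le {β x : ℝ} {m : ℕ} (hβ1 : 1 < β) (hβm : 2 < β ^ m) (k : ℕ) :
    Nk β x (k + m) ≤ (2 ^ m - 1) * Nk β x k := by
  classical
  have hA : (prefixSet β x (k + m)).Finite := Set.toFinite _
  have hB : (prefixSet β x k).Finite := Set.toFinite _
  set A := hA.toFinset with hAdef
  set B := hB.toFinset with hBdef
  rw [Nk, Nk, Set.ncard_eq_toFinset_card _ hA, Set.ncard_eq_toFinset_card _ hB]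
  set res : (Fin (k + m) → Bool) → (Fin k → Bool) :=
    fun v i => v (Fin.castAdd m i) with hres
  set tl : (Fin (k + m) → Bool) → (Fin m → Bool) :=
    fun v j => v (Fin.natAdd k j) with htl
  -- fibers of `res` on `A` have at most `2^m - 1` elements
  have hfib : ∀ a ∈ A.image res, (A.filter fun v => res v = a).card ≤ 2 ^ m - 1 := by
    intro a _
    -- there is a word of length m missed by all fibers
    have hmiss : ∃ u : Fin m → Bool, ∀ v ∈ A.filter fun v => res v = a, tl v ≠ u := by
      by_contra hcon
      push_neg at hcon
      obtain ⟨v₀, hv₀, htl₀⟩ := hcon (fun _ => false)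
      obtain ⟨v₁, hv₁, htl₁⟩ := hcon (fun _ => true)
      rw [Finset.mem_filter] at hv₀ hv₁
      obtain ⟨hv₀A, hv₀r⟩ := hv₀
      obtain ⟨hv₁A, hv₁r⟩ := hv₁
      rw [hAdef, Set.Finite.mem_toFinset] at hv₀A hv₁A
      obtain ⟨ε₀, hε₀, he₀⟩ := hv₀A
      obtain ⟨ε₁, hε₁, he₁⟩ := hv₁A
      refine BetaAux.no_both hβ1 hβm k ε₀ ε₁ hε₀ hε₁ ?_ ?_ ?_
      · intro i hi
        have hik : i < k + m := lt_of_lt_of_le hi (Nat.le_add_right k m)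
        have e0 := he₀ ⟨i, hik⟩
        have e1 := he₁ ⟨i, hik⟩
        have : v₀ ⟨i, hik⟩ = v₁ ⟨i, hik⟩ := by
          have r0 : res v₀ ⟨i, hi⟩ = a ⟨i, hi⟩ := by rw [hv₀r]
          have r1 : res v₁ ⟨i, hi⟩ = a ⟨i, hi⟩ := by rw [hv₁r]
          rw [hres] at r0 r1
          simp only [Fin.castAdd_mk] at r0 r1
          rw [r0, r1]
        simp only [Fin.val_mk] at e0 e1
        rw [e0, e1, this]
      · intro j hj
        have : tl v₀ ⟨j, hj⟩ = false := by rw [htl₀]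
        rw [htl] at this
        exact (he₀ (Fin.natAdd k ⟨j, hj⟩)).trans this
      · intro j hj
        have : tl v₁ ⟨j, hj⟩ = true := by rw [htl₁]
        rw [htl] at this
        exact (he₁ (Fin.natAdd k ⟨j, hj⟩)).trans this
    obtain ⟨u, hu⟩ := hmiss
    have hcard : ((Finset.univ : Finset (Fin m → Bool)).erase u).card = 2 ^ m - 1 := by
      rw [Finset.card_erase_of_mem (Finset.mem_univ u), Finset.card_univ]
      simp
    rw [← hcard]
    refine Finset.card_le_card_of_injOn tl (fun v hv => ?_) ?_
    · exact Finset.mem_erase.mpr ⟨hu v hv, Finset.mem_univ _⟩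
    · intro v hv w hw hvw
      simp only [Finset.coe_filter, Set.mem_setOf_eq] at hv hw
      funext i
      refine Fin.addCases (fun i₀ => ?_) (fun j₀ => ?_) i
      · have : res v i₀ = res w i₀ := by rw [hv.2, hw.2]
        rw [hres] at this
        exact this
      · have : tl v j₀ = tl w j₀ := by rw [hvw]
        rw [htl] at this
        exact this
  have hmain := Finset.card_le_mul_card_image (f := res) A (2 ^ m - 1) hfib
  have hsub : A.image res ⊆ B := by
    intro a ha
    obtain ⟨v, hv, hva⟩ := Finset.mem_image.mp ha
    rw [hAdef, Set.Finite.mem_toFinset] at hv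
    obtain ⟨ε, hε, he⟩ := hv
    rw [hBdef, Set.Finite.mem_toFinset]
    refine ⟨ε, hε, fun i => ?_⟩
    rw [← hva, hres]
    have := he (Fin.castAdd m i)
    simpa using this
  exact le_trans hmain (Nat.mul_le_mul_left _ (Finset.card_le_card hsub))

lemma Nk_le_pow (β x : ℝ) (k : ℕ) : Nk β x k ≤ 2 ^ k := by
  have h := Set.ncard_le_ncard (Set.subset_univ (prefixSet β x k)) Set.finite_univ
  rw [Set.ncard_univ, Nat.card_eq_fintype_card] at h
  simpa [Nk] using h

lemma Nk_le_aux {β x : ℝ} {m : ℕ} (hβ1 : 1 < β) (hβm : 2 < β ^ m) (j s : ℕ) :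
    Nk β x (m * j + s) ≤ (2 ^ m - 1) ^ j * 2 ^ s := by
  induction j with
  | zero => simpa using Nk_le_pow β x s
  | succ j ih =>
      have h1 : m * (j + 1) + s = (m * j + s) + m := by ring
      rw [h1]
      calc Nk β x ((m * j + s) + m) ≤ (2 ^ m - 1) * Nk β x (m * j + s) :=
            Nk_add_le hβ1 hβm _
        _ ≤ (2 ^ m - 1) * ((2 ^ m - 1) ^ j * 2 ^ s) := Nat.mul_le_mul_left _ ih
        _ = (2 ^ m - 1) ^ (j + 1) * 2 ^ s := by ring

lemma logb_nat_nonneg (n : ℕ) : 0 ≤ Real.logb 2 n := by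
  cases n with
  | zero => simp
  | succ p =>
      refine Real.logb_nonneg one_lt_two ?_
      exact_mod_cast Nat.succ_le_succ (Nat.zero_le p)

end BetaAux

theorem limsup_growth_rate_le (m : ℕ) (hm : 2 ≤ m)
    (β : ℝ) (hβ₁ : (2 : ℝ) ^ (1 / (m : ℝ)) < β) (hβ₂ : β < 2)
    (x : ℝ) (hx : x ∈ Set.Ioo 0 (1 / (β - 1))) :
    Filter.limsup (fun k : ℕ => Real.logb 2 (Nk β x k) / k) Filter.atTop ≤
      Real.logb 2 (2 ^ m - 1) / m := by
  have hm0 : 0 < m := lt_of_lt_of_le two_pos hm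
  have hmR : (0 : ℝ) < (m : ℝ) := by exact_mod_cast hm0
  -- basic facts about β
  have hβ1 : 1 < β := by
    have h1 : (1 : ℝ) < (2 : ℝ) ^ (1 / (m : ℝ)) := by
      have : (0 : ℝ) < 1 / (m : ℝ) := by positivity
      calc (1 : ℝ) = (2 : ℝ) ^ (0 : ℝ) := (Real.rpow_zero 2).symm
        _ < (2 : ℝ) ^ (1 / (m : ℝ)) :=
            Real.rpow_lt_rpow_left_iff one_lt_two |>.mpr this
    exact lt_trans h1 hβ₁
  have hβm : 2 < β ^ m := by
    have hpow : ((2 : ℝ) ^ (1 / (m : ℝ))) ^ m = 2 := by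
      rw [← Real.rpow_natCast ((2 : ℝ) ^ (1 / (m : ℝ))) m,
        ← Real.rpow_mul (by norm_num : (0:ℝ) ≤ 2),
        one_div_mul_cancel (ne_of_gt hmR), Real.rpow_one]
    calc (2 : ℝ) = ((2 : ℝ) ^ (1 / (m : ℝ))) ^ m := hpow.symm
      _ < β ^ m := by
          exact pow_lt_pow_left₀ hβ₁ (Real.rpow_nonneg (by norm_num) _) (ne_of_gt hm0)
  set L : ℝ := Real.logb 2 ((2 : ℝ) ^ m - 1) with hLdef
  have h2m : (2 : ℝ) ≤ (2 : ℝ) ^ m := by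
    calc (2 : ℝ) = 2 ^ 1 := (pow_one 2).symm
      _ ≤ 2 ^ m := pow_le_pow_right₀ one_le_two (le_trans one_le_two hm)
  have hC1 : (1 : ℝ) ≤ (2 : ℝ) ^ m - 1 := by linarith
  have hL0 : 0 ≤ L := Real.logb_nonneg one_lt_two hC1
  -- pointwise bound for k ≥ 1
  have hbound : ∀ k : ℕ, 1 ≤ k →
      Real.logb 2 (Nk β x k) / k ≤ L / m + (m : ℝ) / k := by
    intro k hk
    have hkR : (0 : ℝ) < (k : ℝ) := by exact_mod_cast hk
    have hNle : Nk β x k ≤ (2 ^ m - 1) ^ (k / m) * 2 ^ m := by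
      have h1 : m * (k / m) + k % m = k := Nat.div_add_mod k m
      have h2 := BetaAux.Nk_le_aux (β := β) (x := x) hβ1 hβm (k / m) (k % m)
      rw [h1] at h2
      refine le_trans h2 (Nat.mul_le_mul_left _ ?_)
      exact Nat.pow_le_pow_right (by norm_num) (le_of_lt (Nat.mod_lt k hm0))
    have hcast : (((2 ^ m - 1) ^ (k / m) * 2 ^ m : ℕ) : ℝ)
        = ((2 : ℝ) ^ m - 1) ^ (k / m) * 2 ^ m := by
      have h1 : ((2 ^ m - 1 : ℕ) : ℝ) = (2 : ℝ) ^ m - 1 := by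
        rw [Nat.cast_sub (Nat.one_le_two_pow)]; push_cast; ring
      push_cast [h1]
      ring
    have hlog : Real.logb 2 (Nk β x k) ≤ ((k / m : ℕ) : ℝ) * L + m := by
      rcases Nat.eq_zero_or_pos (Nk β x k) with h0 | hpos
      · rw [h0]
        simp only [Nat.cast_zero, Real.logb_zero]
        positivity
      · have hNpos : (0 : ℝ) < (Nk β x k : ℝ) := by exact_mod_cast hpos
        have hBpos : (0 : ℝ) < ((2 : ℝ) ^ m - 1) ^ (k / m) * 2 ^ m := by positivity
        have hle : (Nk β x k : ℝ) ≤ ((2 : ℝ) ^ m - 1) ^ (k / m) * 2 ^ m := by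
          rw [← hcast]; exact_mod_cast hNle
        have := (Real.logb_le_logb one_lt_two hNpos hBpos).mpr hle
        refine le_trans this (le_of_eq ?_)
        rw [Real.logb_mul (by positivity) (by positivity), Real.logb_pow, Real.logb_pow,
          Real.logb_self_eq_one (by norm_num : (1:ℝ) < 2)]
        rw [hLdef]; ring
    have h2 : ((k / m : ℕ) : ℝ) * L ≤ (k : ℝ) * (L / m) := by
      have hcd : ((k / m : ℕ) : ℝ) ≤ (k : ℝ) / (m : ℝ) := Nat.cast_div_le
      calc ((k / m : ℕ) : ℝ) * L ≤ ((k : ℝ) / m) * L :=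
            mul_le_mul_of_nonneg_right hcd hL0
        _ = (k : ℝ) * (L / m) := by ring
    calc Real.logb 2 (Nk β x k) / k ≤ (((k / m : ℕ) : ℝ) * L + m) / k := by
          exact div_le_div_of_nonneg_right hlog hkR.le |>.trans (le_refl _)
      _ ≤ ((k : ℝ) * (L / m) + m) / k := by
          apply div_le_div_of_nonneg_right _ hkR.le
          linarith
      _ = L / m + (m : ℝ) / k := by
          rw [add_div, mul_div_cancel_left₀ _ (ne_of_gt hkR)]
  -- pass to the limsup
  have hev : (fun k : ℕ => Real.logb 2 (Nk β x k) / k)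
      ≤ᶠ[Filter.atTop] fun k : ℕ => L / m + (m : ℝ) / k := by
    filter_upwards [Filter.eventually_ge_atTop 1] with k hk using hbound k hk
  have hcob : Filter.IsCoboundedUnder (· ≤ ·) Filter.atTop
      (fun k : ℕ => Real.logb 2 (Nk β x k) / k) := by
    refine Filter.isCoboundedUnder_le_of_le Filter.atTop (x := 0) fun k => ?_
    have := BetaAux.logb_nat_nonneg (Nk β x k)
    positivity
  have htend : Filter.Tendsto (fun k : ℕ => L / m + (m : ℝ) / k)
      Filter.atTop (nhds (L / m)) := by
    have := tendsto_const_nhds (x := L / m) (f := Filter.atTop (α := ℕ))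
      |>.add (tendsto_const_div_atTop_nhds_zero_nat (m : ℝ))
    simpa using this
  have hbd : Filter.IsBoundedUnder (· ≤ ·) Filter.atTop
      (fun k : ℕ => L / m + (m : ℝ) / k) := htend.isBoundedUnder_le
  calc Filter.limsup (fun k : ℕ => Real.logb 2 (Nk β x k) / k) Filter.atTop
      ≤ Filter.limsup (fun k : ℕ => L / m + (m : ℝ) / k) Filter.atTop :=
        Filter.limsup_le_limsup hev hcob hbd
    _ = L / m := htend.limsup_eq
end

section
/- Let m ≥ 2 be an integer and let β ∈ (2^{1/m}, 2). Then for every x ∈ (0, 1/(β-1)) and every positive integer k, N_{km}(x,β) ≤ (2^m - 1)^k. -/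
namespace NkAux

noncomputable def dig (b : Bool) : ℝ := if b then 1 else 0

noncomputable def S (β : ℝ) (ε : ℕ → Bool) : ℝ := ∑' n : ℕ, dig (ε n) / β ^ (n + 1)

lemma S_eq_of_mem {β x : ℝ} {ε : ℕ → Bool} (h : ε ∈ betaExpansions β x) : S β ε = x := h

lemma dig_nonneg (b : Bool) : 0 ≤ dig b := by unfold dig; split <;> norm_num

lemma dig_le_one (b : Bool) : dig b ≤ 1 := by unfold dig; split <;> norm_num

lemma summable_dig {β : ℝ} (hβ : 1 < β) (ε : ℕ → Bool) :
    Summable fun n => dig (ε n) / β ^ (n + 1) := by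
  have h0 : (0:ℝ) < β := one_pos.trans hβ
  have hlt : 1/β < 1 := by rw [div_lt_one h0]; exact hβ
  have hge : (0:ℝ) ≤ 1/β := by positivity
  apply Summable.of_nonneg_of_le
    (fun n => div_nonneg (dig_nonneg _) (pow_pos h0 _).le) (fun n => ?_)
    (summable_geometric_of_lt_one hge hlt)
  calc dig (ε n) / β ^ (n+1) ≤ 1 / β ^ (n+1) :=
        (div_le_div_iff_of_pos_right (pow_pos h0 _)).mpr (dig_le_one _)
    _ = (1/β)^(n+1) := by rw [div_pow, one_pow]
    _ ≤ (1/β)^n := pow_le_pow_of_le_one hge hlt.le (Nat.le_succ n)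

lemma S_nonneg {β : ℝ} (hβ : 1 < β) (ε : ℕ → Bool) : 0 ≤ S β ε :=
  tsum_nonneg fun n => div_nonneg (dig_nonneg _) (pow_pos (one_pos.trans hβ) _).le

lemma S_le {β : ℝ} (hβ : 1 < β) (ε : ℕ → Bool) : S β ε ≤ 1 / (β - 1) := by
  have h0 : (0:ℝ) < β := one_pos.trans hβ
  have hlt : 1/β < 1 := by rw [div_lt_one h0]; exact hβ
  have hge : (0:ℝ) ≤ 1/β := by positivity
  have hsum : Summable (fun n : ℕ => (1/β)^(n+1)) := by
    simpa [pow_succ] using (summable_geometric_of_lt_one hge hlt).mul_right (1/β)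
  have h1 : S β ε ≤ ∑' n : ℕ, (1/β)^(n+1) := by
    apply Summable.tsum_le_tsum _ (summable_dig hβ ε) hsum
    intro n
    calc dig (ε n) / β ^ (n+1) ≤ 1 / β ^ (n+1) :=
          (div_le_div_iff_of_pos_right (pow_pos h0 _)).mpr (dig_le_one _)
      _ = (1/β)^(n+1) := by rw [div_pow, one_pow]
  refine h1.trans_eq ?_
  have : ∑' n : ℕ, (1/β)^(n+1) = (∑' n : ℕ, (1/β)^n) * (1/β) := by
    rw [← tsum_mul_right]
    exact tsum_congr fun n => by rw [pow_succ]
  rw [this, tsum_geometric_of_lt_one hge hlt]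
  have hb1 : β - 1 ≠ 0 := by nlinarith
  field_simp

lemma S_split {β : ℝ} (hβ : 1 < β) (ε : ℕ → Bool) (j : ℕ) :
    S β ε = (∑ i ∈ Finset.range j, dig (ε i) / β ^ (i+1))
      + (1/β^j) * S β (fun n => ε (n + j)) := by
  have h0 : (0:ℝ) < β := one_pos.trans hβ
  have hsum := summable_dig hβ ε
  rw [S, ← Summable.sum_add_tsum_nat_add j hsum]
  congr 1
  rw [S, ← tsum_mul_left]
  exact tsum_congr fun n => by
    rw [div_mul_div_comm, one_mul, ← pow_add]
    congr 2
    omega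

lemma tail_eq {β x : ℝ} (hβ : 1 < β) {ε ε' : ℕ → Bool}
    (h : S β ε = x) (h' : S β ε' = x) (j : ℕ)
    (hagree : ∀ i < j, ε i = ε' i) :
    S β (fun n => ε (n + j)) = S β (fun n => ε' (n + j)) := by
  have h0 : (0:ℝ) < β := one_pos.trans hβ
  have e1 := S_split hβ ε j
  have e2 := S_split hβ ε' j
  have hP : ∑ i ∈ Finset.range j, dig (ε i) / β ^ (i+1)
      = ∑ i ∈ Finset.range j, dig (ε' i) / β ^ (i+1) :=
    Finset.sum_congr rfl fun i hi => by rw [hagree i (Finset.mem_range.mp hi)]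
  have hne : (1/β^j) ≠ 0 := by positivity
  have key : (1/β^j) * S β (fun n => ε (n+j)) = (1/β^j) * S β (fun n => ε' (n+j)) := by
    linarith
  exact mul_left_cancel₀ hne key

lemma no_two_extremes {β x : ℝ} {m : ℕ} (hβ : 1 < β) (hβm : 2 < β ^ m)
    {ε1 ε2 : ℕ → Bool} (h1 : S β ε1 = x) (h2 : S β ε2 = x) (j : ℕ)
    (hagree : ∀ i < j, ε1 i = ε2 i)
    (hf : ∀ i < m, ε1 (j + i) = false)
    (ht : ∀ i < m, ε2 (j + i) = true) : False := by
  have h0 : (0:ℝ) < β := one_pos.trans hβ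
  have hb1 : (0:ℝ) < β - 1 := by linarith
  have hu : (0:ℝ) < β ^ m := pow_pos h0 m
  have hr := tail_eq hβ h1 h2 j hagree
  have e1 := S_split hβ (fun n => ε1 (n + j)) m
  have e2 := S_split hβ (fun n => ε2 (n + j)) m
  have hP1 : ∑ i ∈ Finset.range m, dig (ε1 (i + j)) / β ^ (i+1) = 0 := by
    apply Finset.sum_eq_zero; intro i hi
    rw [show i + j = j + i from by omega, hf i (Finset.mem_range.mp hi)]
    simp [dig]
  have hP2 : ∑ i ∈ Finset.range m, dig (ε2 (i + j)) / β ^ (i+1)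
      = (1 - 1/β^m)/(β-1) := by
    have step1 : ∀ i ∈ Finset.range m, dig (ε2 (i + j)) / β ^ (i+1) = (1/β)^i * (1/β) := by
      intro i hi
      rw [show i + j = j + i from by omega, ht i (Finset.mem_range.mp hi)]
      simp [dig, one_div, pow_succ, mul_inv, inv_pow]
      ring
    have hβ0 : β ≠ 0 := h0.ne'
    have hpm : β ^ m ≠ 0 := hu.ne'
    have h1b : 1/β - 1 ≠ 0 := by
      intro h
      have h' : (1:ℝ)/β = 1 := by linarith
      rw [div_eq_one_iff_eq hβ0] at h'
      linarith
    rw [Finset.sum_congr rfl step1, ← Finset.sum_mul, geom_sum_eq (fun h => h1b (by rw [h]; ring))]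
    rw [div_pow, one_pow]
    rw [div_mul_eq_mul_div, div_eq_div_iff h1b hb1.ne']
    field_simp
    ring
  have hS1le := S_le hβ (fun n => ε1 (n + m + j))
  have hS2ge := S_nonneg hβ (fun n => ε2 (n + m + j))
  -- note the iterated shift composition
  have comp1 : (fun n => (fun k => ε1 (k + j)) (n + m)) = fun n => ε1 (n + m + j) := rfl
  rw [hP1, comp1, zero_add] at e1
  have comp2 : (fun n => (fun k => ε2 (k + j)) (n + m)) = fun n => ε2 (n + m + j) := rfl
  rw [hP2, comp2] at e2
  have hc : (0:ℝ) < 1/β^m := by positivity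
  have hup : S β (fun n => ε1 (n + j)) ≤ (1/β^m) * (1/(β-1)) := by
    rw [e1]
    exact mul_le_mul_of_nonneg_left hS1le hc.le
  have hlo : (1 - 1/β^m)/(β-1) ≤ S β (fun n => ε2 (n + j)) := by
    rw [e2]
    nlinarith [mul_nonneg hc.le hS2ge]
  rw [← hr] at hlo
  have h5 : (1 - 1/β^m)/(β-1) ≤ (1/β^m) * (1/(β-1)) := hlo.trans hup
  have h6 : 1 - 1/β^m ≤ 1/β^m := by
    have e3 : (1 - 1/β^m)/(β-1) * (β-1) = 1 - 1/β^m := div_mul_cancel₀ _ hb1.ne'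
    have e4 : (1/β^m) * (1/(β-1)) * (β-1) = 1/β^m := by field_simp
    nlinarith [mul_le_mul_of_nonneg_right h5 hb1.le]
  have h7 : (1:ℝ) ≤ 2/β^m := by rw [div_eq_mul_one_div]; linarith
  have h8 : β ^ m ≤ 2 := (one_le_div hu).mp h7
  linarith

end NkAux

namespace NkAux

lemma step {β x : ℝ} {m : ℕ} (hβ : 1 < β) (hβm : 2 < β ^ m) (j : ℕ) :
    Nk β x (j + m) ≤ Nk β x j * (2 ^ m - 1) := by
  classical
  rw [Nk, Nk, Set.ncard_eq_toFinset_card', Set.ncard_eq_toFinset_card']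
  set s : Finset (Fin (j+m) → Bool) := (prefixSet β x (j+m)).toFinset with hs
  set t : Finset (Fin j → Bool) := (prefixSet β x j).toFinset with hts
  have maps : ∀ w ∈ s, (fun i : Fin j => w (Fin.castAdd m i)) ∈ t := by
    intro w hw
    rw [hs, Set.mem_toFinset] at hw
    obtain ⟨ε, hε, hεw⟩ := hw
    rw [hts, Set.mem_toFinset]
    refine ⟨ε, hε, fun i => ?_⟩
    have := hεw (Fin.castAdd m i)
    simpa using this
  rw [mul_comm]
  apply Finset.card_le_mul_card_image_of_maps_to maps
  intro u hu
  set F := {w ∈ s | (fun i : Fin j => w (Fin.castAdd m i)) = u} with hF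
  set g : (Fin (j+m) → Bool) → (Fin m → Bool) := fun w i => w (Fin.natAdd j i) with hg
  have hinj : Set.InjOn g F := by
    intro w1 hw1 w2 hw2 hgw
    simp only [hF, Finset.coe_filter, Set.mem_setOf_eq] at hw1 hw2
    funext i
    refine Fin.addCases (fun i0 => ?_) (fun i0 => ?_) i
    · rw [show w1 (Fin.castAdd m i0) = u i0 from congrFun hw1.2 i0,
        show w2 (Fin.castAdd m i0) = u i0 from congrFun hw2.2 i0]
    · exact congrFun hgw i0
  rw [← Finset.card_image_of_injOn hinj]
  have hnotboth : ¬((fun _ : Fin m => false) ∈ F.image g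
      ∧ (fun _ : Fin m => true) ∈ F.image g) := by
    rintro ⟨hFf, hFt⟩
    rw [Finset.mem_image] at hFf hFt
    obtain ⟨w1, hw1, hgw1⟩ := hFf
    obtain ⟨w2, hw2, hgw2⟩ := hFt
    rw [hF, Finset.mem_filter] at hw1 hw2
    have hw1s := hw1.1; rw [hs, Set.mem_toFinset] at hw1s
    have hw2s := hw2.1; rw [hs, Set.mem_toFinset] at hw2s
    obtain ⟨ε1, hε1, he1⟩ := hw1s
    obtain ⟨ε2, hε2, he2⟩ := hw2s
    refine no_two_extremes hβ hβm (S_eq_of_mem hε1) (S_eq_of_mem hε2) j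
      (fun i hi => ?_) (fun i hi => ?_) (fun i hi => ?_)
    · have a1 := he1 (Fin.castAdd m ⟨i, hi⟩)
      have a2 := he2 (Fin.castAdd m ⟨i, hi⟩)
      have b1 := congrFun hw1.2 ⟨i, hi⟩
      have b2 := congrFun hw2.2 ⟨i, hi⟩
      simp only [Fin.coe_castAdd] at a1 a2
      rw [a1, b1, a2, b2]
    · have a1 := he1 (Fin.natAdd j ⟨i, hi⟩)
      have b1 := congrFun hgw1 ⟨i, hi⟩
      simp only [Fin.coe_natAdd] at a1
      rw [a1]
      exact b1
    · have a2 := he2 (Fin.natAdd j ⟨i, hi⟩)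
      have b2 := congrFun hgw2 ⟨i, hi⟩
      simp only [Fin.coe_natAdd] at a2
      rw [a2]
      exact b2
  have hcard : ∀ v : Fin m → Bool, (Finset.univ.erase v).card = 2 ^ m - 1 := by
    intro v
    rw [Finset.card_erase_of_mem (Finset.mem_univ _), Finset.card_univ]
    congr 1
    simp [Fintype.card_fun]
  by_cases hFf : (fun _ : Fin m => false) ∈ F.image g
  · have hFt : (fun _ : Fin m => true) ∉ F.image g := fun h => hnotboth ⟨hFf, h⟩
    refine le_trans (Finset.card_le_card ?_) (le_of_eq (hcard (fun _ => true)))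
    intro v hv
    exact Finset.mem_erase.mpr ⟨fun h => hFt (h ▸ hv), Finset.mem_univ v⟩
  · refine le_trans (Finset.card_le_card ?_) (le_of_eq (hcard (fun _ => false)))
    intro v hv
    exact Finset.mem_erase.mpr ⟨fun h => hFf (h ▸ hv), Finset.mem_univ v⟩

end NkAux


theorem Nk_le_pow (m : ℕ) (hm : 2 ≤ m)
    (β : ℝ) (hβ₁ : (2 : ℝ) ^ (1 / (m : ℝ)) < β) (hβ₂ : β < 2)
    (x : ℝ) (hx : x ∈ Set.Ioo 0 (1 / (β - 1))) (k : ℕ) (hk : 0 < k) :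
    Nk β x (k * m) ≤ (2 ^ m - 1) ^ k := by
  have hmpos : (0:ℝ) < (m:ℝ) := by
    have : 0 < m := by omega
    exact_mod_cast this
  have hc1 : (1:ℝ) < 2 ^ (1/(m:ℝ)) := by
    have h := Real.rpow_lt_rpow_of_exponent_lt (by norm_num : (1:ℝ) < 2)
      (show (0:ℝ) < 1/(m:ℝ) by positivity)
    simpa using h
  have hβ : 1 < β := hc1.trans hβ₁
  have hβm : 2 < β ^ m := by
    have h2 : ((2:ℝ) ^ (1/(m:ℝ))) ^ m = 2 := by
      rw [← Real.rpow_natCast ((2:ℝ) ^ (1/(m:ℝ))) m, ← Real.rpow_mul (by norm_num : (0:ℝ) ≤ 2),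
        one_div, inv_mul_cancel₀ hmpos.ne', Real.rpow_one]
    calc (2:ℝ) = ((2:ℝ) ^ (1/(m:ℝ))) ^ m := h2.symm
      _ < β ^ m := by
          apply pow_lt_pow_left₀ hβ₁ (by positivity)
          omega
  have main : ∀ n : ℕ, Nk β x (n*m) ≤ (2^m-1)^n := by
    intro n
    induction n with
    | zero =>
      simp only [Nat.zero_mul, pow_zero]
      have hsub : prefixSet β x 0 ⊆ {fun i : Fin 0 => i.elim0} := by
        intro w _
        have : w = fun i : Fin 0 => i.elim0 := funext fun i => i.elim0
        simp [this]
      calc Nk β x 0 ≤ ({fun i : Fin 0 => i.elim0} : Set (Fin 0 → Bool)).ncard :=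
            Set.ncard_le_ncard hsub (Set.finite_singleton _)
        _ = 1 := Set.ncard_singleton _
    | succ n ih =>
      have hnm : (n+1)*m = n*m + m := by ring
      rw [hnm, pow_succ]
      exact (NkAux.step hβ hβm (n*m)).trans (Nat.mul_le_mul_right _ ih)
  exact main k
end
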